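/- arXiv:2511.03979 — 5 statements merged into one kernel-verified Lean document; each statement's English description precedes it below -/
import Mathlib

section
/- For every integer n > 0, A(n) = C(n+1); that is, the number of partitions of n into distinct parts equals the number of partitions of n+1 whose largest part is even and in which every part not exceeding half of the largest part appears exactly once. -/
namespace AC
open Finset Multiset

/-- 2-adic valuation -/
def v (k : ℕ) : ℕ := k.factorization 2

/-- odd part -/
def u (k : ℕ) : ℕ := k / 2 ^ v k

/-- binary digit `a` of `x` -/
def bit (a x : ℕ) : ℕ := x / 2 ^ a % 2

lemma pow_v_mul_u (k : ℕ) : 2 ^ v k * u k = k :=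
  Nat.ordProj_mul_ordCompl_eq_self k 2

lemma u_odd {k : ℕ} (hk : k ≠ 0) : ¬ 2 ∣ u k :=
  Nat.not_dvd_ordCompl Nat.prime_two hk

lemma u_pos {k : ℕ} (hk : k ≠ 0) : 0 < u k :=
  Nat.ordCompl_pos 2 hk

lemma u_le (k : ℕ) : u k ≤ k := Nat.div_le_self _ _

lemma pow_v_le {k : ℕ} (hk : k ≠ 0) : 2 ^ v k ≤ k := Nat.ordProj_le 2 hk

lemma v_mul_pow {j : ℕ} (hj : ¬ 2 ∣ j) (a : ℕ) : v (2 ^ a * j) = a := by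
  have hj0 : j ≠ 0 := by rintro rfl; exact hj (dvd_zero 2)
  unfold v
  rw [Nat.factorization_mul (pow_ne_zero _ two_ne_zero) hj0]
  simp [Nat.Prime.factorization_pow Nat.prime_two,
    Nat.factorization_eq_zero_of_not_dvd hj]

lemma u_mul_pow {j : ℕ} (hj : ¬ 2 ∣ j) (a : ℕ) : u (2 ^ a * j) = j := by
  unfold u
  rw [v_mul_pow hj, Nat.mul_div_cancel_left _ (pow_pos two_pos a)]

lemma u_zero : u 0 = 0 := by simp [u]

lemma v_pos_of_even {k : ℕ} (hk : k ≠ 0) (h2 : 2 ∣ k) : 0 < v k :=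
  Nat.Prime.factorization_pos_of_dvd Nat.prime_two hk h2

lemma bit_le_one (a x : ℕ) : bit a x ≤ 1 :=
  Nat.lt_succ_iff.mp (Nat.mod_lt _ two_pos)

lemma pow_le_of_bit {a x : ℕ} (h : bit a x = 1) : 2 ^ a ≤ x := by
  by_contra hlt
  push_neg at hlt
  simp [bit, Nat.div_eq_of_lt hlt] at h

lemma bit_eq_zero_of_lt {a x : ℕ} (h : x < 2 ^ a) : bit a x = 0 := by
  simp [bit, Nat.div_eq_of_lt h]

lemma sum_bits_lt {t : ℕ} {ε : ℕ → ℕ} (hε : ∀ a < t, ε a ≤ 1) :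
    ∑ a ∈ Finset.range t, 2 ^ a * ε a < 2 ^ t := by
  induction t with
  | zero => simp
  | succ t ih =>
    rw [Finset.sum_range_succ]
    have h1 : ∑ a ∈ Finset.range t, 2 ^ a * ε a < 2 ^ t :=
      ih (fun a ha => hε a (ha.trans (Nat.lt_succ_self t)))
    have h2 : 2 ^ t * ε t ≤ 2 ^ t * 1 :=
      Nat.mul_le_mul_left _ (hε t (Nat.lt_succ_self t))
    calc ∑ a ∈ Finset.range t, 2 ^ a * ε a + 2 ^ t * ε t
        < 2 ^ t + 2 ^ t * 1 := by omega
      _ = 2 ^ (t + 1) := by ring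

lemma recomp (x t : ℕ) :
    (∑ a ∈ Finset.range t, 2 ^ a * bit a x) + 2 ^ t * (x / 2 ^ t) = x := by
  induction t with
  | zero => simp
  | succ t ih =>
    rw [Finset.sum_range_succ]
    have hd : x / 2 ^ t / 2 = x / 2 ^ (t + 1) := by
      rw [Nat.div_div_eq_div_mul, pow_succ]
    have : 2 ^ t * (x / 2 ^ t) =
        2 ^ t * bit t x + 2 ^ (t + 1) * (x / 2 ^ (t + 1)) := by
      have h := Nat.div_add_mod (x / 2 ^ t) 2
      rw [← hd]
      unfold bit
      calc 2 ^ t * (x / 2 ^ t) = 2 ^ t * (2 * (x / 2 ^ t / 2) + x / 2 ^ t % 2) := by rw [h]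
        _ = 2 ^ t * (x / 2 ^ t % 2) + 2 ^ (t + 1) * (x / 2 ^ t / 2) := by ring
    omega

lemma recomp_lt {x t : ℕ} (h : x < 2 ^ t) :
    ∑ a ∈ Finset.range t, 2 ^ a * bit a x = x := by
  have := recomp x t
  rw [Nat.div_eq_of_lt h] at this
  omega

lemma div_canon {t r : ℕ} {ε : ℕ → ℕ} (hε : ∀ a < t, ε a ≤ 1) :
    ((∑ a ∈ Finset.range t, 2 ^ a * ε a) + 2 ^ t * r) / 2 ^ t = r := by
  rw [Nat.add_mul_div_left _ _ (pow_pos two_pos t),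
    Nat.div_eq_of_lt (sum_bits_lt hε), Nat.zero_add]

lemma bit_canon {t : ℕ} {ε : ℕ → ℕ} (hε : ∀ a < t, ε a ≤ 1) :
    ∀ r, ∀ b < t, bit b ((∑ a ∈ Finset.range t, 2 ^ a * ε a) + 2 ^ t * r) = ε b := by
  induction t with
  | zero => intro r b hb; omega
  | succ t ih =>
    intro r b hb
    have hε' : ∀ a < t, ε a ≤ 1 := fun a ha => hε a (ha.trans (Nat.lt_succ_self t))
    have hrw : (∑ a ∈ Finset.range (t+1), 2 ^ a * ε a) + 2 ^ (t+1) * r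
        = (∑ a ∈ Finset.range t, 2 ^ a * ε a) + 2 ^ t * (ε t + 2 * r) := by
      rw [Finset.sum_range_succ]; ring
    rcases Nat.lt_or_ge b t with hbt | hbt
    · rw [hrw]; exact ih hε' _ b hbt
    · have hbt' : b = t := by omega
      subst hbt'
      rw [hrw]
      unfold bit
      rw [Nat.add_mul_div_left _ _ (pow_pos two_pos b),
        Nat.div_eq_of_lt (sum_bits_lt hε'), Nat.zero_add,
        Nat.add_mul_mod_self_left,
        Nat.mod_eq_of_lt (by have := hε b (Nat.lt_succ_self b); omega)]

lemma exists_bit {x : ℕ} (hx : x ≠ 0) : ∃ a, bit a x = 1 := by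
  refine ⟨Nat.log 2 x, ?_⟩
  have h1 : 2 ^ Nat.log 2 x ≤ x := Nat.pow_log_le_self 2 hx
  have h2 : x < 2 ^ (Nat.log 2 x + 1) := Nat.lt_pow_succ_log_self (by norm_num) x
  have h3 : x / 2 ^ Nat.log 2 x < 2 :=
    (Nat.div_lt_iff_lt_mul (pow_pos two_pos (Nat.log 2 x))).mpr (by rw [pow_succ] at h2; omega)
  have h4 : 1 ≤ x / 2 ^ Nat.log 2 x := (Nat.one_le_div_iff (pow_pos two_pos _)).mpr h1
  have : x / 2 ^ Nat.log 2 x = 1 := by omega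
  simp [bit, this]

lemma sup_mem {s : Multiset ℕ} (hs : s ≠ 0) : s.sup ∈ s := by
  induction s using Multiset.induction with
  | empty => simp at hs
  | cons a t ih =>
    rw [Multiset.sup_cons]
    rcases eq_or_ne t 0 with rfl | ht
    · simp
    · rcases max_cases a t.sup with ⟨h, _⟩ | ⟨h, _⟩
      · rw [show a ⊔ t.sup = max a t.sup from rfl, h]; exact Multiset.mem_cons_self a t
      · rw [show a ⊔ t.sup = max a t.sup from rfl, h]; exact Multiset.mem_cons_of_mem (ih ht)


/-! ### F side: definitions -/

def MF (P : Multiset ℕ) : ℕ := (P.map u).sup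
def SF (P : Multiset ℕ) : ℕ := MF P + 1
def cF (P : Multiset ℕ) (N j : ℕ) : ℕ :=
  ∑ a ∈ Finset.range N, 2 ^ a * (if 2 ^ a * j ∈ P then 1 else 0)
def c'F (P : Multiset ℕ) (N j : ℕ) : ℕ := cF P N j - (if j = MF P then 1 else 0)
def tJ (S j : ℕ) : ℕ := Nat.log 2 (S / j)
def perJ (S c j : ℕ) : Multiset ℕ :=
  Multiset.replicate (c / 2 ^ tJ S j) (2 ^ tJ S j * j) +
  ∑ a ∈ Finset.range (tJ S j), Multiset.replicate (bit a c) (2 ^ a * j)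
def JF (P : Multiset ℕ) : Finset ℕ := (P.map u).toFinset
def outF (P : Multiset ℕ) (N : ℕ) : Multiset ℕ :=
  SF P ::ₘ ∑ j ∈ JF P, perJ (SF P) (c'F P N j) j

lemma tJ_le {S j : ℕ} (hj : 0 < j) (hjS : j ≤ S) : 2 ^ tJ S j * j ≤ S := by
  have h0 : S / j ≠ 0 := by
    have := (Nat.one_le_div_iff hj).mpr hjS; omega
  have h1 : 2 ^ tJ S j ≤ S / j := Nat.pow_log_le_self 2 h0
  exact (Nat.le_div_iff_mul_le hj).mp h1

lemma tJ_lt {S j : ℕ} (hj : 0 < j) (hS : 0 < S) : S < 2 ^ (tJ S j + 1) * j := by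
  rcases le_or_gt j S with h | h
  · have h2 : S / j < 2 ^ (tJ S j + 1) := Nat.lt_pow_succ_log_self (by norm_num) _
    exact (Nat.div_lt_iff_lt_mul hj).mp h2
  · calc S < j := h
      _ ≤ 2 ^ (tJ S j + 1) * j := Nat.le_mul_of_pos_left j (pow_pos two_pos _)

lemma tJ_unique {S j a : ℕ} (hj : 0 < j) (h1 : 2 ^ a * j ≤ S)
    (h2 : S < 2 ^ (a + 1) * j) : tJ S j = a :=
  Nat.log_eq_of_pow_le_of_lt_pow ((Nat.le_div_iff_mul_le hj).mpr h1)
    ((Nat.div_lt_iff_lt_mul hj).mpr h2)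

lemma tJ_uS {S : ℕ} (hS : S ≠ 0) : tJ S (u S) = v S := by
  apply tJ_unique (u_pos hS)
  · rw [pow_v_mul_u]
  · have h1 : 2 ^ (v S + 1) * u S = 2 * (2 ^ v S * u S) := by ring
    rw [h1, pow_v_mul_u]
    omega

lemma multiset_sum_sum {α : Type*} (s : Finset α) (f : α → Multiset ℕ) :
    (∑ j ∈ s, f j).sum = ∑ j ∈ s, (f j).sum := by
  induction s using Finset.cons_induction with
  | empty => simp
  | cons a s ha ih => rw [Finset.sum_cons, Finset.sum_cons, Multiset.sum_add, ih]

lemma sum_perJ {S c j : ℕ} : (perJ S c j).sum = c * j := by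
  rw [perJ, Multiset.sum_add, Multiset.sum_replicate, multiset_sum_sum]
  have : ∀ a, (Multiset.replicate (bit a c) (2 ^ a * j)).sum = 2 ^ a * bit a c * j := by
    intro a
    rw [Multiset.sum_replicate, smul_eq_mul]; ring
  rw [Finset.sum_congr rfl (fun a _ => this a), smul_eq_mul, ← Finset.sum_mul]
  have h := recomp c (tJ S j)
  calc c / 2 ^ tJ S j * (2 ^ tJ S j * j) + (∑ a ∈ Finset.range (tJ S j), 2 ^ a * bit a c) * j
      = ((∑ a ∈ Finset.range (tJ S j), 2 ^ a * bit a c) + 2 ^ tJ S j * (c / 2 ^ tJ S j)) * j := by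
        ring
    _ = c * j := by rw [h]

lemma count_perJ {S c j : ℕ} (hj : ¬ 2 ∣ j) (k : ℕ) :
    Multiset.count k (perJ S c j) =
      if u k = j then
        (if v k = tJ S j then c / 2 ^ tJ S j
         else if v k < tJ S j then bit (v k) c else 0)
      else 0 := by
  have hj0 : j ≠ 0 := by rintro rfl; exact hj (dvd_zero 2)
  rw [perJ, Multiset.count_add, Multiset.count_replicate, Multiset.count_sum']
  by_cases h : u k = j
  · have hk0 : k ≠ 0 := by
      rintro rfl; rw [u_zero] at h; exact hj0 h.symm
    have key : ∀ a : ℕ, k = 2 ^ a * j ↔ a = v k := by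
      intro a
      constructor
      · rintro rfl; rw [v_mul_pow hj]
      · rintro rfl; rw [← h, pow_v_mul_u]
    have h2 : ∀ a ∈ Finset.range (tJ S j),
        Multiset.count k (Multiset.replicate (bit a c) (2 ^ a * j)) =
          if a = v k then bit a c else 0 := by
      intro a _
      rw [Multiset.count_replicate]
      congr 1
      rw [eq_iff_iff, eq_comm, key a]
    rw [Finset.sum_congr rfl h2,
      Finset.sum_ite_eq' (Finset.range (tJ S j)) (v k) (fun a => bit a c)]
    rw [if_pos h]
    by_cases h3 : v k = tJ S j
    · rw [if_pos ((key _).mpr h3.symm).symm, if_pos h3]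
      have h4 : ¬ (v k < tJ S j) := by omega
      simp [h4, Finset.mem_range]
    · rw [if_neg (fun hh : (2:ℕ) ^ tJ S j * j = k => h3 ((key _).mp hh.symm).symm), if_neg h3]
      by_cases h4 : v k < tJ S j
      · simp [h4, Finset.mem_range]
      · simp [h4, Finset.mem_range]
  · have hne : ∀ a : ℕ, k ≠ 2 ^ a * j := by
      intro a hh
      rw [hh, u_mul_pow hj] at h
      exact h rfl
    rw [if_neg h, if_neg (fun hh : (2:ℕ) ^ tJ S j * j = k => hne _ hh.symm)]
    rw [Finset.sum_congr rfl (fun a _ => by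
      rw [Multiset.count_replicate, if_neg (fun hh : (2:ℕ) ^ a * j = k => hne a hh.symm)] )]
    simp

section Fctx

variable {P : Multiset ℕ} {n : ℕ}

lemma P_ne_zero (hsum : P.sum = n) (hn : 0 < n) : P ≠ 0 := by
  rintro rfl
  rw [Multiset.sum_zero] at hsum
  omega

lemma mem_JF {j : ℕ} : j ∈ JF P ↔ ∃ i ∈ P, u i = j := by
  simp [JF, Multiset.mem_toFinset, Multiset.mem_map]

lemma JF_odd (hpos : ∀ i ∈ P, 0 < i) {j : ℕ} (hj : j ∈ JF P) : ¬ 2 ∣ j := by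
  obtain ⟨i, hi, rfl⟩ := mem_JF.mp hj
  exact u_odd (by have := hpos i hi; omega)

lemma JF_pos (hpos : ∀ i ∈ P, 0 < i) {j : ℕ} (hj : j ∈ JF P) : 0 < j := by
  obtain ⟨i, hi, rfl⟩ := mem_JF.mp hj
  exact u_pos (by have := hpos i hi; omega)

lemma JF_le_MF {j : ℕ} (hj : j ∈ JF P) : j ≤ MF P := by
  obtain ⟨i, hi, rfl⟩ := mem_JF.mp hj
  exact Multiset.le_sup (Multiset.mem_map_of_mem u hi)

lemma MF_mem (hsum : P.sum = n) (hn : 0 < n) : MF P ∈ JF P := by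
  have h0 : P.map u ≠ 0 := by
    simpa using P_ne_zero hsum hn
  rw [JF, Multiset.mem_toFinset]
  exact sup_mem h0

lemma MF_odd (hpos : ∀ i ∈ P, 0 < i) (hsum : P.sum = n) (hn : 0 < n) :
    ¬ 2 ∣ MF P := JF_odd hpos (MF_mem hsum hn)

lemma MF_pos (hpos : ∀ i ∈ P, 0 < i) (hsum : P.sum = n) (hn : 0 < n) :
    0 < MF P := JF_pos hpos (MF_mem hsum hn)

lemma part_le_n (hsum : P.sum = n) {i : ℕ} (hi : i ∈ P) : i ≤ n := by
  rw [← hsum]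
  exact Multiset.single_le_sum (fun x _ => Nat.zero_le x) _ hi

lemma n_lt_pow : (n : ℕ) < 2 ^ (n + 1) :=
  (Nat.lt_two_pow_self (n := n)).trans_le (Nat.pow_le_pow_right (by norm_num) (Nat.le_succ n))

lemma v_lt_N (hpos : ∀ i ∈ P, 0 < i) (hsum : P.sum = n) {i : ℕ} (hi : i ∈ P) :
    v i < n + 1 := by
  have h1 : 2 ^ v i ≤ i := pow_v_le (by have := hpos i hi; omega)
  have h2 : i ≤ n := part_le_n hsum hi
  have h3 := n_lt_pow (n := n)
  have : 2 ^ v i < 2 ^ (n + 1) := by omega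
  exact (Nat.pow_lt_pow_iff_right (by norm_num)).mp this

lemma cF_lt {j : ℕ} : cF P (n + 1) j < 2 ^ (n + 1) := by
  apply sum_bits_lt
  intro a _
  split <;> omega

lemma bit_cF (hsum : P.sum = n) {j : ℕ} (hj : 0 < j) (a : ℕ) :
    bit a (cF P (n + 1) j) = if 2 ^ a * j ∈ P then 1 else 0 := by
  rcases Nat.lt_or_ge a (n + 1) with ha | ha
  · have hc : cF P (n + 1) j = (∑ b ∈ Finset.range (n + 1),
        2 ^ b * (if 2 ^ b * j ∈ P then 1 else 0)) + 2 ^ (n + 1) * 0 := by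
      rw [cF, mul_zero, add_zero]
    rw [hc, bit_canon (fun b _ => by split <;> omega) 0 a ha]
  · have h1 : bit a (cF P (n + 1) j) = 0 := by
      apply bit_eq_zero_of_lt
      calc cF P (n + 1) j < 2 ^ (n + 1) := cF_lt
        _ ≤ 2 ^ a := Nat.pow_le_pow_right (by norm_num) ha
    rw [h1, if_neg]
    intro hmem
    have h2 : 2 ^ a * j ≤ n := part_le_n hsum hmem
    have h3 : 2 ^ a ≤ n := le_trans (Nat.le_mul_of_pos_right _ hj) h2
    have h4 := n_lt_pow (n := n)
    have h5 : 2 ^ a < 2 ^ (n + 1) := by omega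
    have := (Nat.pow_lt_pow_iff_right (a := 2) (by norm_num)).mp h5
    omega

lemma mem_iff_bit_cF (hsum : P.sum = n) {k : ℕ} (hk : k ≠ 0) :
    (k ∈ P) ↔ bit (v k) (cF P (n + 1) (u k)) = 1 := by
  rw [bit_cF hsum (u_pos hk), pow_v_mul_u]
  split <;> simp_all

lemma cF_M_pos (hpos : ∀ i ∈ P, 0 < i) (hsum : P.sum = n) (hn : 0 < n) :
    1 ≤ cF P (n + 1) (MF P) := by
  obtain ⟨i, hi, hui⟩ := mem_JF.mp (MF_mem hsum hn)
  have h1 : bit (v i) (cF P (n + 1) (MF P)) = 1 := by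
    rw [← hui]
    exact (mem_iff_bit_cF hsum (by have := hpos i hi; omega)).mp hi
  have h2 := pow_le_of_bit h1
  have h3 : 0 < 2 ^ v i := pow_pos two_pos _
  omega

lemma count_outF (hpos : ∀ i ∈ P, 0 < i) (k : ℕ) :
    Multiset.count k (outF P (n + 1)) =
      (if k = SF P then 1 else 0) +
      (if u k ∈ JF P then
        (if v k = tJ (SF P) (u k) then c'F P (n + 1) (u k) / 2 ^ tJ (SF P) (u k)
         else if v k < tJ (SF P) (u k) then bit (v k) (c'F P (n + 1) (u k)) else 0)
       else 0) := by
  rw [outF, Multiset.count_cons, Multiset.count_sum']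
  rw [Finset.sum_congr rfl (fun j hj => count_perJ (JF_odd hpos hj) k)]
  rw [Finset.sum_ite_eq (JF P) (u k)]
  rw [add_comm]

lemma sum_outF (hpos : ∀ i ∈ P, 0 < i) (hnd : P.Nodup) (hsum : P.sum = n) (hn : 0 < n) :
    (outF P (n + 1)).sum = n + 1 := by
  have hM : MF P ∈ JF P := MF_mem hsum hn
  rw [outF, Multiset.sum_cons, multiset_sum_sum,
    Finset.sum_congr rfl (fun j _ => sum_perJ)]
  have claim2 : ∑ j ∈ JF P, cF P (n + 1) j * j = n := by
    have step1 : ∀ j ∈ JF P, cF P (n + 1) j * j =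
        ∑ a ∈ Finset.range (n + 1), (if 2 ^ a * j ∈ P then 2 ^ a * j else 0) := by
      intro j _
      rw [cF, Finset.sum_mul]
      congr 1
      ext a
      split <;> ring
    rw [Finset.sum_congr rfl step1, ← Finset.sum_product']
    rw [← Finset.sum_filter]
    rw [Finset.sum_nbij' (i := fun p : ℕ × ℕ => 2 ^ p.2 * p.1) (j := fun k => (u k, v k))
      (t := P.toFinset) (g := fun k => k)]
    · rw [← hsum]
      have hval : P.toFinset.val = P := by
        rw [Multiset.toFinset_val, Multiset.Nodup.dedup hnd]
      rw [Finset.sum_eq_multiset_sum, hval, Multiset.map_id']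
    · intro p hp
      simp only [Finset.mem_filter] at hp
      rw [Multiset.mem_toFinset]
      exact hp.2
    · intro k hk
      rw [Multiset.mem_toFinset] at hk
      simp only [Finset.mem_filter, Finset.mem_product, Finset.mem_range]
      refine ⟨⟨mem_JF.mpr ⟨k, hk, rfl⟩, v_lt_N hpos hsum hk⟩, ?_⟩
      rw [pow_v_mul_u]
      exact hk
    · intro p hp
      simp only [Finset.mem_filter, Finset.mem_product] at hp
      have hodd : ¬ 2 ∣ p.1 := JF_odd hpos hp.1.1
      simp [u_mul_pow hodd, v_mul_pow hodd]
    · intro k hk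
      rw [Multiset.mem_toFinset] at hk
      simp [pow_v_mul_u]
    · intro p _
      rfl
  have claim1 : (∑ j ∈ JF P, c'F P (n + 1) j * j) + MF P = n := by
    rw [← Finset.sum_erase_add _ _ hM] at claim2 ⊢
    have he : ∀ j ∈ (JF P).erase (MF P), c'F P (n + 1) j * j = cF P (n + 1) j * j := by
      intro j hj
      rw [c'F, if_neg (Finset.ne_of_mem_erase hj)]
      simp
    rw [Finset.sum_congr rfl he]
    have hc : 1 ≤ cF P (n + 1) (MF P) := cF_M_pos hpos hsum hn
    obtain ⟨c', hc'⟩ := Nat.exists_eq_add_of_le hc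
    have hcM : c'F P (n + 1) (MF P) = c' := by
      rw [c'F, if_pos rfl, hc']
      omega
    rw [hcM]
    rw [hc'] at claim2
    have hx : (1 + c') * MF P = MF P + c' * MF P := by ring
    omega
  rw [SF]
  omega

end Fctx

section Fprop

variable {P : Multiset ℕ} {n : ℕ}

lemma count_outF_eq_zero (hpos : ∀ i ∈ P, 0 < i) {k : ℕ} (hk : SF P < k) :
    Multiset.count k (outF P (n + 1)) = 0 := by
  rw [count_outF hpos]
  rw [if_neg (by omega)]
  rw [zero_add]
  split
  case isFalse => rfl
  case isTrue hj =>
    have hjpos : 0 < u k := JF_pos hpos hj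
    have hjS : u k ≤ SF P := le_trans (JF_le_MF hj) (by rw [SF]; omega)
    have hk0 : k ≠ 0 := by omega
    have hkey : k = 2 ^ v k * u k := (pow_v_mul_u k).symm
    have hle : 2 ^ tJ (SF P) (u k) * u k ≤ SF P := tJ_le hjpos hjS
    split
    case isTrue h3 =>
      rw [hkey, h3] at hk
      omega
    case isFalse h3 =>
      split
      case isFalse => rfl
      case isTrue h4 =>
        have : 2 ^ v k * u k ≤ 2 ^ tJ (SF P) (u k) * u k :=
          Nat.mul_le_mul_right _ (Nat.pow_le_pow_right (by norm_num) (by omega))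
        omega

lemma SF_mem_outF (hpos : ∀ i ∈ P, 0 < i) : SF P ∈ outF P (n + 1) := by
  rw [← Multiset.count_pos, count_outF hpos, if_pos rfl]
  omega

lemma sup_outF (hpos : ∀ i ∈ P, 0 < i) : (outF P (n + 1)).sup = SF P := by
  apply le_antisymm
  · rw [Multiset.sup_le]
    intro k hk
    by_contra hlt
    push_neg at hlt
    rw [← Multiset.count_pos, count_outF_eq_zero hpos hlt] at hk
    omega
  · exact Multiset.le_sup (SF_mem_outF hpos)

lemma even_SF (hpos : ∀ i ∈ P, 0 < i) (hsum : P.sum = n) (hn : 0 < n) :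
    Even (SF P) := by
  have hodd := MF_odd hpos hsum hn
  rw [SF, Nat.even_add_one]
  rw [Nat.even_iff]
  omega

lemma count_outF_le_one (hpos : ∀ i ∈ P, 0 < i) {k : ℕ} (hk : 2 * k ≤ SF P) :
    Multiset.count k (outF P (n + 1)) ≤ 1 := by
  have hS : 0 < SF P := by rw [SF]; omega
  rw [count_outF hpos, if_neg (by omega)]
  rw [zero_add]
  split
  case isFalse => omega
  case isTrue hj =>
    have hjpos : 0 < u k := JF_pos hpos hj
    have hkey : k = 2 ^ v k * u k := (pow_v_mul_u k).symm
    split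
    case isTrue h3 =>
      have hlt : SF P < 2 ^ (tJ (SF P) (u k) + 1) * u k := tJ_lt hjpos hS
      rw [pow_succ] at hlt
      have : 2 ^ tJ (SF P) (u k) * 2 * u k = 2 * (2 ^ tJ (SF P) (u k) * u k) := by ring
      rw [this] at hlt
      rw [hkey, h3] at hk
      omega
    case isFalse h3 =>
      split
      case isTrue => exact bit_le_one _ _
      case isFalse => omega

lemma pos_outF (hpos : ∀ i ∈ P, 0 < i) {k : ℕ} (hk : k ∈ outF P (n + 1)) : 0 < k := by
  rcases Nat.eq_zero_or_pos k with rfl | h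
  · exfalso
    rw [← Multiset.count_pos, count_outF hpos] at hk
    have h1 : (0 : ℕ) ≠ SF P := by rw [SF]; omega
    have h2 : u 0 ∉ JF P := by
      rw [u_zero]
      intro hmem
      exact absurd (JF_pos hpos hmem) (by omega)
    rw [if_neg h1, if_neg h2] at hk
    omega
  · exact h

end Fprop

/-! ### G side -/

def dG (Q : Multiset ℕ) (N j : ℕ) : ℕ :=
  (∑ a ∈ Finset.range N, 2 ^ a * Q.count (2 ^ a * j)) -
    (if j = u Q.sup then 2 ^ v Q.sup else 0)
def cG (Q : Multiset ℕ) (N j : ℕ) : ℕ := dG Q N j + (if j = Q.sup - 1 then 1 else 0)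
def outG (Q : Multiset ℕ) (N n : ℕ) : Finset ℕ :=
  (Finset.Icc 1 n).filter (fun k => bit (v k) (cG Q N (u k)) = 1)
def JG (Q : Multiset ℕ) : Finset ℕ := Q.toFinset.image u ∪ {Q.sup - 1}

lemma lt_of_pow_le {a c b : ℕ} (h : 2 ^ a ≤ b) (hb : b < 2 ^ c) : a < c :=
  (Nat.pow_lt_pow_iff_right (a := 2) (by norm_num)).mp (by omega)

section Gctx

variable {Q : Multiset ℕ} {n : ℕ}

lemma Q_ne_zero (hQsum : Q.sum = n + 1) : Q ≠ 0 := by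
  rintro rfl
  simp at hQsum

lemma S_mem (hQsum : Q.sum = n + 1) : Q.sup ∈ Q := sup_mem (Q_ne_zero hQsum)

lemma S_pos (hQpos : ∀ i ∈ Q, 0 < i) (hQsum : Q.sum = n + 1) : 0 < Q.sup :=
  hQpos _ (S_mem hQsum)

lemma S_le (hQsum : Q.sum = n + 1) : Q.sup ≤ n + 1 := by
  rw [← hQsum]
  exact Multiset.single_le_sum (fun x _ => Nat.zero_le x) _ (S_mem hQsum)

lemma vS_pos (hQpos : ∀ i ∈ Q, 0 < i) (hQsum : Q.sum = n + 1) (hCe : Even Q.sup) :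
    0 < v Q.sup := by
  exact v_pos_of_even (by have := S_pos hQpos hQsum; omega) hCe.two_dvd

lemma count_gt {k : ℕ} (hk : Q.sup < k) : Q.count k = 0 := by
  rw [Multiset.count_eq_zero]
  intro hmem
  exact absurd (Multiset.le_sup hmem) (by omega)

lemma count_le_small (hC1 : ∀ a ∈ Q, 2 * a ≤ Q.sup → Q.count a = 1)
    {k : ℕ} (hk : 2 * k ≤ Q.sup) : Q.count k ≤ 1 := by
  by_cases h : k ∈ Q
  · rw [hC1 k h hk]
  · rw [Multiset.count_eq_zero.mpr h]; omega

lemma count_S_pos (hQsum : Q.sum = n + 1) : 1 ≤ Q.count Q.sup :=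
  Multiset.one_le_count_iff_mem.mpr (S_mem hQsum)

lemma tJ_lt_N {j : ℕ} (hj0 : 0 < j) (hjS : j ≤ Q.sup) (hQsum : Q.sum = n + 1) :
    tJ Q.sup j < n + 2 := by
  have h1 : 2 ^ tJ Q.sup j * j ≤ Q.sup := tJ_le hj0 hjS
  have h2 : 2 ^ tJ Q.sup j ≤ 2 ^ tJ Q.sup j * j := Nat.le_mul_of_pos_right _ hj0
  have h3 : Q.sup ≤ n + 1 := S_le hQsum
  have h4 : (n + 1 : ℕ) < 2 ^ (n + 2) := n_lt_pow (n := n + 1)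
  exact lt_of_pow_le (b := n + 1) (by omega) h4

lemma full_trunc (hQsum : Q.sum = n + 1) {j : ℕ} (hj0 : 0 < j) (hjS : j ≤ Q.sup) :
    ∑ a ∈ Finset.range (n + 2), 2 ^ a * Q.count (2 ^ a * j) =
      (∑ a ∈ Finset.range (tJ Q.sup j), 2 ^ a * Q.count (2 ^ a * j)) +
        2 ^ tJ Q.sup j * Q.count (2 ^ tJ Q.sup j * j) := by
  have ht : tJ Q.sup j + 1 ≤ n + 2 := tJ_lt_N hj0 hjS hQsum
  rw [← Finset.sum_range_succ (fun a => 2 ^ a * Q.count (2 ^ a * j)) (tJ Q.sup j)]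
  symm
  apply Finset.sum_subset (Finset.range_subset_range.mpr ht)
  intro a ha hna
  rw [Finset.mem_range] at ha hna
  have ha' : tJ Q.sup j + 1 ≤ a := by omega
  have hS0 : 0 < Q.sup := by
    rcases Nat.eq_zero_or_pos Q.sup with h | h
    · omega
    · exact h
  have h1 : Q.sup < 2 ^ (tJ Q.sup j + 1) * j := tJ_lt hj0 hS0
  have h2 : 2 ^ (tJ Q.sup j + 1) * j ≤ 2 ^ a * j :=
    Nat.mul_le_mul_right _ (Nat.pow_le_pow_right (by norm_num) ha')
  rw [count_gt (by omega)]
  omega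

lemma dG_decomp (hQsum : Q.sum = n + 1) {j : ℕ} (hj : ¬ 2 ∣ j) (hj0 : 0 < j)
    (hjS : j ≤ Q.sup) :
    dG Q (n + 2) j = (∑ a ∈ Finset.range (tJ Q.sup j), 2 ^ a * Q.count (2 ^ a * j)) +
      2 ^ tJ Q.sup j * (Q.count (2 ^ tJ Q.sup j * j) - (if j = u Q.sup then 1 else 0)) := by
  rw [dG, full_trunc hQsum hj0 hjS]
  by_cases h : j = u Q.sup
  · have hS0 : Q.sup ≠ 0 := by
      intro h0; rw [h0] at hjS; omega
    have ht : tJ Q.sup j = v Q.sup := by rw [h]; exact tJ_uS hS0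
    have hSj : 2 ^ tJ Q.sup j * j = Q.sup := by rw [ht, h, pow_v_mul_u]
    obtain ⟨c, hc⟩ := Nat.exists_eq_add_of_le (count_S_pos hQsum)
    rw [if_pos h, if_pos h, hSj, ht, hc]
    have h1 : 2 ^ v Q.sup * (1 + c) = 2 ^ v Q.sup + 2 ^ v Q.sup * c := by ring
    have h2 : (1 + c - 1) = c := by omega
    rw [h1, h2]
    omega
  · rw [if_neg h, if_neg h]
    simp

lemma count_small_of_lt_tJ (hC1 : ∀ a ∈ Q, 2 * a ≤ Q.sup → Q.count a = 1)
    {j a : ℕ} (hj0 : 0 < j) (ha : a < tJ Q.sup j) (hjS : j ≤ Q.sup) :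
    Q.count (2 ^ a * j) ≤ 1 := by
  apply count_le_small hC1
  have h1 : 2 ^ tJ Q.sup j * j ≤ Q.sup := tJ_le hj0 hjS
  have h2 : 2 * (2 ^ a * j) ≤ 2 ^ tJ Q.sup j * j := by
    have : (2 : ℕ) ^ (a + 1) ≤ 2 ^ tJ Q.sup j := Nat.pow_le_pow_right (by norm_num) (by omega)
    calc 2 * (2 ^ a * j) = 2 ^ (a + 1) * j := by ring
      _ ≤ 2 ^ tJ Q.sup j * j := Nat.mul_le_mul_right _ this
  omega

lemma bit_dG (hQsum : Q.sum = n + 1) (hC1 : ∀ a ∈ Q, 2 * a ≤ Q.sup → Q.count a = 1)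
    {j b : ℕ} (hj : ¬ 2 ∣ j) (hj0 : 0 < j) (hjS : j ≤ Q.sup) (hb : b < tJ Q.sup j) :
    bit b (dG Q (n + 2) j) = Q.count (2 ^ b * j) := by
  rw [dG_decomp hQsum hj hj0 hjS]
  exact bit_canon (fun a ha => count_small_of_lt_tJ hC1 hj0 ha hjS) _ b hb

lemma div_dG (hQsum : Q.sum = n + 1) (hC1 : ∀ a ∈ Q, 2 * a ≤ Q.sup → Q.count a = 1)
    {j : ℕ} (hj : ¬ 2 ∣ j) (hj0 : 0 < j) (hjS : j ≤ Q.sup) :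
    dG Q (n + 2) j / 2 ^ tJ Q.sup j =
      Q.count (2 ^ tJ Q.sup j * j) - (if j = u Q.sup then 1 else 0) := by
  rw [dG_decomp hQsum hj hj0 hjS]
  exact div_canon (fun a ha => count_small_of_lt_tJ hC1 hj0 ha hjS)

lemma JG_odd (hQpos : ∀ i ∈ Q, 0 < i) (hQsum : Q.sum = n + 1) (hCe : Even Q.sup)
    {j : ℕ} (hj : j ∈ JG Q) : ¬ 2 ∣ j := by
  rw [JG, Finset.mem_union, Finset.mem_image, Finset.mem_singleton] at hj
  rcases hj with ⟨p, hp, rfl⟩ | rfl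
  · rw [Multiset.mem_toFinset] at hp
    exact u_odd (by have := hQpos p hp; omega)
  · have h1 : 0 < Q.sup := S_pos hQpos hQsum
    rw [Nat.even_iff] at hCe
    omega

lemma JG_pos (hQpos : ∀ i ∈ Q, 0 < i) (hQsum : Q.sum = n + 1) (hCe : Even Q.sup)
    {j : ℕ} (hj : j ∈ JG Q) : 0 < j := by
  have := JG_odd hQpos hQsum hCe hj
  omega

lemma JG_le (hQpos : ∀ i ∈ Q, 0 < i) (hQsum : Q.sum = n + 1) (hCe : Even Q.sup)
    {j : ℕ} (hj : j ∈ JG Q) : j ≤ Q.sup - 1 := by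
  rw [JG, Finset.mem_union, Finset.mem_image, Finset.mem_singleton] at hj
  rcases hj with ⟨p, hp, rfl⟩ | rfl
  · rw [Multiset.mem_toFinset] at hp
    have h1 : u p ≤ p := u_le p
    have h2 : p ≤ Q.sup := Multiset.le_sup hp
    have h3 : ¬ 2 ∣ u p := u_odd (by have := hQpos p hp; omega)
    rw [Nat.even_iff] at hCe
    omega
  · omega

lemma uS_mem_JG (hQsum : Q.sum = n + 1) : u Q.sup ∈ JG Q := by
  rw [JG, Finset.mem_union, Finset.mem_image]
  exact Or.inl ⟨Q.sup, Multiset.mem_toFinset.mpr (S_mem hQsum), rfl⟩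

lemma Sm1_mem_JG : Q.sup - 1 ∈ JG Q := by
  rw [JG, Finset.mem_union, Finset.mem_singleton]
  exact Or.inr rfl

lemma cG_eq_zero {j : ℕ} (hj : ¬ 2 ∣ j) (hjn : j ∉ JG Q) : cG Q (n + 2) j = 0 := by
  have hfull : ∀ a : ℕ, Q.count (2 ^ a * j) = 0 := by
    intro a
    rw [Multiset.count_eq_zero]
    intro hmem
    apply hjn
    rw [JG, Finset.mem_union, Finset.mem_image]
    exact Or.inl ⟨2 ^ a * j, Multiset.mem_toFinset.mpr hmem, u_mul_pow hj a⟩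
  have hj1 : j ≠ Q.sup - 1 := by
    intro h
    exact hjn (h ▸ Sm1_mem_JG)
  rw [cG, dG, if_neg hj1]
  rw [Finset.sum_congr rfl (fun a _ => by rw [hfull a, mul_zero])]
  simp

end Gctx

section Gsum

variable {Q : Multiset ℕ} {n : ℕ}

lemma full_sum (hQpos : ∀ i ∈ Q, 0 < i) (hQsum : Q.sum = n + 1) (hCe : Even Q.sup) :
    ∑ j ∈ JG Q, (∑ a ∈ Finset.range (n + 2), 2 ^ a * Q.count (2 ^ a * j)) * j = n + 1 := by
  have step1 : ∀ j ∈ JG Q,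
      (∑ a ∈ Finset.range (n + 2), 2 ^ a * Q.count (2 ^ a * j)) * j =
        ∑ a ∈ Finset.range (n + 2),
          (if 2 ^ a * j ∈ Q then Q.count (2 ^ a * j) * (2 ^ a * j) else 0) := by
    intro j _
    rw [Finset.sum_mul]
    congr 1
    ext a
    by_cases h : 2 ^ a * j ∈ Q
    · rw [if_pos h]; ring
    · rw [if_neg h, Multiset.count_eq_zero.mpr h]; ring
  rw [Finset.sum_congr rfl step1, ← Finset.sum_product', ← Finset.sum_filter]
  rw [Finset.sum_nbij' (i := fun p : ℕ × ℕ => 2 ^ p.2 * p.1) (j := fun k => (u k, v k))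
    (t := Q.toFinset) (g := fun k => Q.count k * k)]
  · have h := congrArg Multiset.sum (Multiset.toFinset_sum_count_nsmul_eq Q)
    rw [multiset_sum_sum] at h
    rw [← hQsum, ← h]
    apply Finset.sum_congr rfl
    intro k _
    rw [Multiset.sum_nsmul, Multiset.sum_singleton, smul_eq_mul]
  · intro p hp
    simp only [Finset.mem_filter] at hp
    rw [Multiset.mem_toFinset]
    exact hp.2
  · intro k hk
    rw [Multiset.mem_toFinset] at hk
    simp only [Finset.mem_filter, Finset.mem_product, Finset.mem_range]
    have hk0 : k ≠ 0 := by have := hQpos k hk; omega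
    have h1 : 2 ^ v k ≤ k := pow_v_le hk0
    have h2 : k ≤ n + 1 := by
      rw [← hQsum]
      exact Multiset.single_le_sum (fun x _ => Nat.zero_le x) _ hk
    have h4 : (n + 1 : ℕ) < 2 ^ (n + 2) := n_lt_pow (n := n + 1)
    refine ⟨⟨?_, lt_of_pow_le (b := n + 1) (by omega) h4⟩, ?_⟩
    · rw [JG, Finset.mem_union, Finset.mem_image]
      exact Or.inl ⟨k, Multiset.mem_toFinset.mpr hk, rfl⟩
    · rw [pow_v_mul_u]
      exact hk
  · intro p hp
    simp only [Finset.mem_filter, Finset.mem_product] at hp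
    have hodd : ¬ 2 ∣ p.1 := JG_odd hQpos hQsum hCe hp.1.1
    simp [u_mul_pow hodd, v_mul_pow hodd]
  · intro k hk
    rw [Multiset.mem_toFinset] at hk
    simp [pow_v_mul_u]
  · intro p _
    rfl

end Gsum

section Gsum2

variable {Q : Multiset ℕ} {n : ℕ}

lemma sumJd (hQpos : ∀ i ∈ Q, 0 < i) (hQsum : Q.sum = n + 1) (hCe : Even Q.sup) :
    (∑ j ∈ JG Q, dG Q (n + 2) j * j) + Q.sup = n + 1 := by
  have hfull := full_sum hQpos hQsum hCe
  have hmem : u Q.sup ∈ JG Q := uS_mem_JG hQsum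
  rw [← Finset.sum_erase_add _ _ hmem] at hfull ⊢
  have he : ∀ j ∈ (JG Q).erase (u Q.sup), dG Q (n + 2) j * j =
      (∑ a ∈ Finset.range (n + 2), 2 ^ a * Q.count (2 ^ a * j)) * j := by
    intro j hj
    rw [dG, if_neg (Finset.ne_of_mem_erase hj)]
    simp
  rw [Finset.sum_congr rfl he]
  -- handle the u Q.sup term
  have hS0 : Q.sup ≠ 0 := by have := S_pos hQpos hQsum; omega
  have hvN : v Q.sup < n + 2 := by
    have h1 : 2 ^ v Q.sup ≤ Q.sup := pow_v_le hS0
    have h2 : Q.sup ≤ n + 1 := S_le hQsum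
    exact lt_of_pow_le (b := n + 1) (by omega) (n_lt_pow (n := n + 1))
  have hterm : 2 ^ v Q.sup * Q.count (2 ^ v Q.sup * u Q.sup) * 1 ≤
      ∑ a ∈ Finset.range (n + 2), 2 ^ a * Q.count (2 ^ a * u Q.sup) := by
    rw [mul_one]
    exact Finset.single_le_sum (f := fun a => 2 ^ a * Q.count (2 ^ a * u Q.sup))
      (fun a _ => Nat.zero_le _) (Finset.mem_range.mpr hvN)
  rw [pow_v_mul_u] at hterm
  have hcS : 1 ≤ Q.count Q.sup := count_S_pos hQsum
  have hge : 2 ^ v Q.sup ≤ ∑ a ∈ Finset.range (n + 2), 2 ^ a * Q.count (2 ^ a * u Q.sup) := by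
    have : 2 ^ v Q.sup * 1 ≤ 2 ^ v Q.sup * Q.count Q.sup := Nat.mul_le_mul_left _ hcS
    omega
  have hd : dG Q (n + 2) (u Q.sup) * u Q.sup =
      (∑ a ∈ Finset.range (n + 2), 2 ^ a * Q.count (2 ^ a * u Q.sup)) * u Q.sup - Q.sup := by
    rw [dG, if_pos rfl, Nat.sub_mul, pow_v_mul_u]
  rw [hd]
  have hSle : Q.sup ≤ (∑ a ∈ Finset.range (n + 2), 2 ^ a * Q.count (2 ^ a * u Q.sup)) * u Q.sup := by
    calc Q.sup = 2 ^ v Q.sup * u Q.sup := (pow_v_mul_u Q.sup).symm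
      _ ≤ (∑ a ∈ Finset.range (n + 2), 2 ^ a * Q.count (2 ^ a * u Q.sup)) * u Q.sup :=
        Nat.mul_le_mul_right _ hge
  omega

lemma sumJc (hQpos : ∀ i ∈ Q, 0 < i) (hQsum : Q.sum = n + 1) (hCe : Even Q.sup) :
    ∑ j ∈ JG Q, cG Q (n + 2) j * j = n := by
  have hd := sumJd hQpos hQsum hCe
  have hmem : Q.sup - 1 ∈ JG Q := Sm1_mem_JG
  rw [← Finset.sum_erase_add _ _ hmem] at hd ⊢
  have he : ∀ j ∈ (JG Q).erase (Q.sup - 1), cG Q (n + 2) j * j = dG Q (n + 2) j * j := by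
    intro j hj
    rw [cG, if_neg (Finset.ne_of_mem_erase hj), add_zero]
  rw [Finset.sum_congr rfl he]
  have hc : cG Q (n + 2) (Q.sup - 1) * (Q.sup - 1) =
      dG Q (n + 2) (Q.sup - 1) * (Q.sup - 1) + (Q.sup - 1) := by
    rw [cG, if_pos rfl, Nat.add_mul, one_mul]
  rw [hc]
  have hS1 : 1 ≤ Q.sup := S_pos hQpos hQsum
  have hSle : Q.sup ≤ n + 1 := S_le hQsum
  omega

lemma cG_le (hQpos : ∀ i ∈ Q, 0 < i) (hQsum : Q.sum = n + 1) (hCe : Even Q.sup)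
    {j : ℕ} (hj : j ∈ JG Q) : cG Q (n + 2) j * j ≤ n := by
  have h1 := sumJc hQpos hQsum hCe
  have h2 : cG Q (n + 2) j * j ≤ ∑ j ∈ JG Q, cG Q (n + 2) j * j :=
    Finset.single_le_sum (f := fun j => cG Q (n + 2) j * j) (fun a _ => Nat.zero_le _) hj
  omega

lemma mem_outG {k : ℕ} :
    k ∈ outG Q (n + 2) n ↔ 1 ≤ k ∧ k ≤ n ∧ bit (v k) (cG Q (n + 2) (u k)) = 1 := by
  rw [outG, Finset.mem_filter, Finset.mem_Icc]
  tauto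

lemma mem_JG_of_bit (hQpos : ∀ i ∈ Q, 0 < i) {k : ℕ} (hk : k ≠ 0)
    (hb : bit (v k) (cG Q (n + 2) (u k)) = 1) : u k ∈ JG Q := by
  by_contra hnot
  rw [cG_eq_zero (u_odd hk) hnot] at hb
  simp [bit] at hb

lemma sum_outG (hQpos : ∀ i ∈ Q, 0 < i) (hQsum : Q.sum = n + 1) (hCe : Even Q.sup) :
    ∑ k ∈ outG Q (n + 2) n, k = n := by
  rw [Finset.sum_nbij' (i := fun k => (u k, v k)) (j := fun p : ℕ × ℕ => 2 ^ p.2 * p.1)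
    (t := (JG Q ×ˢ Finset.range (n + 2)).filter (fun p => bit p.2 (cG Q (n + 2) p.1) = 1))
    (g := fun p : ℕ × ℕ => 2 ^ p.2 * p.1)]
  · -- ∑ over pairs = n
    rw [Finset.sum_filter, Finset.sum_product]
    have step : ∀ j ∈ JG Q, (∑ a ∈ Finset.range (n + 2),
        (if bit a (cG Q (n + 2) j) = 1 then 2 ^ a * j else 0)) = cG Q (n + 2) j * j := by
      intro j hj
      have hb : ∀ a, (if bit a (cG Q (n + 2) j) = 1 then 2 ^ a * j else 0) =
          (2 ^ a * bit a (cG Q (n + 2) j)) * j := by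
        intro a
        have := bit_le_one a (cG Q (n + 2) j)
        interval_cases h : bit a (cG Q (n + 2) j) <;> simp
      rw [Finset.sum_congr rfl (fun a _ => hb a), ← Finset.sum_mul]
      congr 1
      apply recomp_lt
      have h1 : cG Q (n + 2) j * j ≤ n := cG_le hQpos hQsum hCe hj
      have h2 : 0 < j := JG_pos hQpos hQsum hCe hj
      have h3 : cG Q (n + 2) j ≤ n := le_trans (Nat.le_mul_of_pos_right _ h2) h1
      have h4 : (n : ℕ) < 2 ^ (n + 2) :=
        lt_of_lt_of_le (n_lt_pow (n := n)) (Nat.pow_le_pow_right (by norm_num) (by omega))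
      omega
    rw [Finset.sum_congr rfl step]
    exact sumJc hQpos hQsum hCe
  · intro k hk
    rw [mem_outG] at hk
    obtain ⟨h1, h2, h3⟩ := hk
    simp only [Finset.mem_filter, Finset.mem_product, Finset.mem_range]
    refine ⟨⟨mem_JG_of_bit hQpos (by omega) h3, ?_⟩, h3⟩
    have hp : 2 ^ v k ≤ k := pow_v_le (by omega)
    exact lt_of_pow_le (b := n + 1) (by omega) (n_lt_pow (n := n + 1))
  · intro p hp
    simp only [Finset.mem_filter, Finset.mem_product, Finset.mem_range] at hp
    obtain ⟨⟨hj, _⟩, hb⟩ := hp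
    have hodd : ¬ 2 ∣ p.1 := JG_odd hQpos hQsum hCe hj
    have hj0 : 0 < p.1 := JG_pos hQpos hQsum hCe hj
    rw [mem_outG, u_mul_pow hodd, v_mul_pow hodd]
    refine ⟨Nat.one_le_iff_ne_zero.mpr (by positivity), ?_, hb⟩
    have h1 : 2 ^ p.2 ≤ cG Q (n + 2) p.1 := pow_le_of_bit hb
    have h2 : cG Q (n + 2) p.1 * p.1 ≤ n := cG_le hQpos hQsum hCe hj
    calc 2 ^ p.2 * p.1 ≤ cG Q (n + 2) p.1 * p.1 := Nat.mul_le_mul_right _ h1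
      _ ≤ n := h2
  · intro k hk
    rw [mem_outG] at hk
    simp [pow_v_mul_u]
  · intro p hp
    simp only [Finset.mem_filter, Finset.mem_product] at hp
    have hodd : ¬ 2 ∣ p.1 := JG_odd hQpos hQsum hCe hp.1.1
    simp [u_mul_pow hodd, v_mul_pow hodd]
  · intro k _
    simp [pow_v_mul_u]

end Gsum2

section RT1

variable {P : Multiset ℕ} {n : ℕ}

lemma MF_le_n (hsum : P.sum = n) (hn : 0 < n) : MF P ≤ n := by
  obtain ⟨i, hi, hui⟩ := mem_JF.mp (MF_mem hsum hn)
  calc MF P = u i := hui.symm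
    _ ≤ i := u_le i
    _ ≤ n := part_le_n hsum hi

lemma dG_outF (hpos : ∀ i ∈ P, 0 < i) (hnd : P.Nodup) (hsum : P.sum = n) (hn : 0 < n)
    {j : ℕ} (hj : ¬ 2 ∣ j) (hj0 : 0 < j) :
    dG (outF P (n + 1)) (n + 2) j = c'F P (n + 1) j := by
  have hQsup : (outF P (n + 1)).sup = SF P := sup_outF hpos
  have hSFle : SF P ≤ n + 1 := by
    have := MF_le_n hsum hn
    rw [SF]; omega
  have hSF0 : SF P ≠ 0 := by rw [SF]; omega
  have hcnt : ∀ a : ℕ, (outF P (n + 1)).count (2 ^ a * j) =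
      (if 2 ^ a * j = SF P then 1 else 0) +
      (if j ∈ JF P then
        (if a = tJ (SF P) j then c'F P (n + 1) j / 2 ^ tJ (SF P) j
         else if a < tJ (SF P) j then bit a (c'F P (n + 1) j) else 0)
       else 0) := by
    intro a
    rw [count_outF hpos (2 ^ a * j), u_mul_pow hj, v_mul_pow hj]
  rw [dG, hQsup]
  rw [Finset.sum_congr rfl (fun a _ => by rw [hcnt a, Nat.mul_add])]
  rw [Finset.sum_add_distrib]
  have hvSF : v (SF P) < n + 2 := by
    have h1 : 2 ^ v (SF P) ≤ SF P := pow_v_le hSF0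
    exact lt_of_pow_le (b := n + 1) (by omega) (n_lt_pow (n := n + 1))
  have hfirst : ∑ a ∈ Finset.range (n + 2), 2 ^ a * (if 2 ^ a * j = SF P then 1 else 0) =
      if j = u (SF P) then 2 ^ v (SF P) else 0 := by
    by_cases hju : j = u (SF P)
    · rw [if_pos hju]
      have hiff : ∀ a : ℕ, (2 ^ a * j = SF P) ↔ a = v (SF P) := by
        intro a
        constructor
        · intro h
          have := congrArg v h
          rwa [v_mul_pow hj] at this
        · rintro rfl
          rw [hju, pow_v_mul_u]
      have : ∀ a ∈ Finset.range (n + 2), 2 ^ a * (if 2 ^ a * j = SF P then 1 else 0) =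
          if a = v (SF P) then 2 ^ a else 0 := by
        intro a _
        by_cases h : a = v (SF P)
        · rw [if_pos ((hiff a).mpr h), if_pos h, mul_one]
        · rw [if_neg (fun hh => h ((hiff a).mp hh)), if_neg h, mul_zero]
      rw [Finset.sum_congr rfl this, Finset.sum_ite_eq' (Finset.range (n + 2)) (v (SF P))
        (fun a => 2 ^ a), if_pos (Finset.mem_range.mpr hvSF)]
    · rw [if_neg hju]
      have : ∀ a ∈ Finset.range (n + 2), 2 ^ a * (if 2 ^ a * j = SF P then 1 else 0) = 0 := by
        intro a _
        rw [if_neg, mul_zero]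
        intro hh
        apply hju
        have := congrArg u hh
        rwa [u_mul_pow hj] at this
      rw [Finset.sum_congr rfl this]
      simp
  rw [hfirst]
  have hsecond : ∑ a ∈ Finset.range (n + 2),
      2 ^ a * (if j ∈ JF P then
        (if a = tJ (SF P) j then c'F P (n + 1) j / 2 ^ tJ (SF P) j
         else if a < tJ (SF P) j then bit a (c'F P (n + 1) j) else 0)
       else 0) = c'F P (n + 1) j := by
    by_cases hjJ : j ∈ JF P
    · have hjS : j ≤ SF P := by
        have := JF_le_MF hjJ
        rw [SF]; omega
      have htlt : tJ (SF P) j < n + 2 := by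
        have h1 : 2 ^ tJ (SF P) j * j ≤ SF P := tJ_le hj0 hjS
        have h2 : 2 ^ tJ (SF P) j ≤ 2 ^ tJ (SF P) j * j := Nat.le_mul_of_pos_right _ hj0
        exact lt_of_pow_le (b := n + 1) (by omega) (n_lt_pow (n := n + 1))
      rw [Finset.sum_congr rfl (fun a _ => by rw [if_pos hjJ])]
      rw [show Finset.range (n + 2) = Finset.range (tJ (SF P) j + 1) ∪
        (Finset.range (n + 2) \ Finset.range (tJ (SF P) j + 1)) from by
          rw [Finset.union_sdiff_of_subset (Finset.range_subset_range.mpr (by omega))]]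
      rw [Finset.sum_union (Finset.disjoint_sdiff)]
      have hz : ∀ a ∈ Finset.range (n + 2) \ Finset.range (tJ (SF P) j + 1),
          2 ^ a * (if a = tJ (SF P) j then c'F P (n + 1) j / 2 ^ tJ (SF P) j
           else if a < tJ (SF P) j then bit a (c'F P (n + 1) j) else 0) = 0 := by
        intro a ha
        rw [Finset.mem_sdiff, Finset.mem_range, Finset.mem_range] at ha
        rw [if_neg (by omega), if_neg (by omega), mul_zero]
      rw [Finset.sum_congr rfl hz, Finset.sum_const_zero, add_zero]
      rw [Finset.sum_range_succ, if_pos rfl]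
      have hz2 : ∀ a ∈ Finset.range (tJ (SF P) j),
          2 ^ a * (if a = tJ (SF P) j then c'F P (n + 1) j / 2 ^ tJ (SF P) j
           else if a < tJ (SF P) j then bit a (c'F P (n + 1) j) else 0) =
          2 ^ a * bit a (c'F P (n + 1) j) := by
        intro a ha
        rw [Finset.mem_range] at ha
        rw [if_neg (by omega), if_pos ha]
      rw [Finset.sum_congr rfl hz2]
      exact recomp _ _
    · rw [Finset.sum_congr rfl (fun a _ => by rw [if_neg hjJ, mul_zero]),
        Finset.sum_const_zero]
      have hcF : cF P (n + 1) j = 0 := by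
        rw [cF]
        apply Finset.sum_eq_zero
        intro a _
        rw [if_neg, mul_zero]
        intro hmem
        exact hjJ (mem_JF.mpr ⟨_, hmem, u_mul_pow hj a⟩)
      rw [c'F, hcF]
      simp
  rw [hsecond]
  omega

lemma cG_outF (hpos : ∀ i ∈ P, 0 < i) (hnd : P.Nodup) (hsum : P.sum = n) (hn : 0 < n)
    {j : ℕ} (hj : ¬ 2 ∣ j) (hj0 : 0 < j) :
    cG (outF P (n + 1)) (n + 2) j = cF P (n + 1) j := by
  have hQsup : (outF P (n + 1)).sup = SF P := sup_outF hpos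
  rw [cG, dG_outF hpos hnd hsum hn hj hj0, hQsup]
  have hSm : SF P - 1 = MF P := by rw [SF]; omega
  rw [hSm, c'F]
  by_cases h : j = MF P
  · rw [if_pos h]
    have := cF_M_pos hpos hsum hn
    subst h
    omega
  · rw [if_neg h]
    omega

lemma roundtrip1 (hpos : ∀ i ∈ P, 0 < i) (hnd : P.Nodup) (hsum : P.sum = n) (hn : 0 < n) :
    (outG (outF P (n + 1)) (n + 2) n).val = P := by
  rw [Multiset.Nodup.ext (Finset.nodup _) hnd]
  intro k
  rw [← Finset.mem_def, mem_outG]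
  constructor
  · rintro ⟨h1, h2, h3⟩
    have hk0 : k ≠ 0 := by omega
    rw [cG_outF hpos hnd hsum hn (u_odd hk0) (u_pos hk0)] at h3
    exact (mem_iff_bit_cF hsum hk0).mpr h3
  · intro hk
    have hk0 : k ≠ 0 := by have := hpos k hk; omega
    refine ⟨by omega, part_le_n hsum hk, ?_⟩
    rw [cG_outF hpos hnd hsum hn (u_odd hk0) (u_pos hk0)]
    exact (mem_iff_bit_cF hsum hk0).mp hk

end RT1

section RT2

variable {Q : Multiset ℕ} {n : ℕ}

lemma outG_pos : ∀ i ∈ (outG Q (n + 2) n).val, 0 < i := by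
  intro i hi
  rw [Finset.mem_val, mem_outG] at hi
  omega

lemma outG_sum (hQpos : ∀ i ∈ Q, 0 < i) (hQsum : Q.sum = n + 1) (hCe : Even Q.sup) :
    ((outG Q (n + 2) n).val).sum = n := by
  have h := sum_outG hQpos hQsum hCe
  rwa [Finset.sum_eq_multiset_sum, Multiset.map_id'] at h

lemma mem_outG_val {k : ℕ} : k ∈ (outG Q (n + 2) n).val ↔
    1 ≤ k ∧ k ≤ n ∧ bit (v k) (cG Q (n + 2) (u k)) = 1 := by
  rw [Finset.mem_val, mem_outG]

lemma u_mem_JG {k : ℕ} (hk : k ∈ Q) : u k ∈ JG Q := by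
  rw [JG, Finset.mem_union, Finset.mem_image]
  exact Or.inl ⟨k, Multiset.mem_toFinset.mpr hk, rfl⟩

lemma dG_le_cG {j : ℕ} : dG Q (n + 2) j ≤ cG Q (n + 2) j := by
  rw [cG]; omega

lemma JF_outG_iff (hQpos : ∀ i ∈ Q, 0 < i) (hQsum : Q.sum = n + 1) (hCe : Even Q.sup)
    {j : ℕ} (hj : ¬ 2 ∣ j) (hj0 : 0 < j) :
    j ∈ JF (outG Q (n + 2) n).val ↔ (j ∈ JG Q ∧ cG Q (n + 2) j ≠ 0) := by
  constructor
  · intro hjf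
    obtain ⟨i, hi, rfl⟩ := mem_JF.mp hjf
    rw [mem_outG_val] at hi
    obtain ⟨h1, h2, h3⟩ := hi
    refine ⟨mem_JG_of_bit hQpos (by omega) h3, ?_⟩
    have h4 := pow_le_of_bit h3
    have h5 : 0 < 2 ^ v i := pow_pos two_pos (v i)
    omega
  · rintro ⟨hjg, hc⟩
    obtain ⟨a, ha⟩ := exists_bit hc
    have hk1 : 1 ≤ 2 ^ a * j := Nat.mul_pos (pow_pos two_pos a) hj0
    have hk2 : 2 ^ a * j ≤ n := by
      have h1 : 2 ^ a ≤ cG Q (n + 2) j := pow_le_of_bit ha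
      have h2 : cG Q (n + 2) j * j ≤ n := cG_le hQpos hQsum hCe hjg
      calc 2 ^ a * j ≤ cG Q (n + 2) j * j := Nat.mul_le_mul_right _ h1
        _ ≤ n := h2
    apply mem_JF.mpr
    refine ⟨2 ^ a * j, ?_, u_mul_pow hj a⟩
    rw [mem_outG_val, u_mul_pow hj, v_mul_pow hj]
    exact ⟨hk1, hk2, ha⟩

lemma MF_outG (hQpos : ∀ i ∈ Q, 0 < i) (hQsum : Q.sum = n + 1) (hCe : Even Q.sup)
    (hn : 0 < n) : MF ((outG Q (n + 2) n).val) = Q.sup - 1 := by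
  have hPsum : ((outG Q (n + 2) n).val).sum = n := outG_sum hQpos hQsum hCe
  apply le_antisymm
  · have hmem := MF_mem hPsum hn
    have hodd := JF_odd outG_pos hmem
    have hpos' := JF_pos outG_pos hmem
    have := (JF_outG_iff hQpos hQsum hCe hodd hpos').mp hmem
    exact JG_le hQpos hQsum hCe this.1
  · apply JF_le_MF
    apply (JF_outG_iff hQpos hQsum hCe (JG_odd hQpos hQsum hCe Sm1_mem_JG)
      (JG_pos hQpos hQsum hCe Sm1_mem_JG)).mpr
    refine ⟨Sm1_mem_JG, ?_⟩
    rw [cG, if_pos rfl]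
    omega

lemma SF_outG (hQpos : ∀ i ∈ Q, 0 < i) (hQsum : Q.sum = n + 1) (hCe : Even Q.sup)
    (hn : 0 < n) : SF ((outG Q (n + 2) n).val) = Q.sup := by
  rw [SF, MF_outG hQpos hQsum hCe hn]
  have := S_pos hQpos hQsum
  omega

lemma cF_outG (hQpos : ∀ i ∈ Q, 0 < i) (hQsum : Q.sum = n + 1) (hCe : Even Q.sup)
    {j : ℕ} (hj : ¬ 2 ∣ j) (hj0 : 0 < j) :
    cF ((outG Q (n + 2) n).val) (n + 1) j = cG Q (n + 2) j := by
  by_cases hjg : j ∈ JG Q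
  · have hstep : ∀ a ∈ Finset.range (n + 1),
        2 ^ a * (if 2 ^ a * j ∈ (outG Q (n + 2) n).val then 1 else 0) =
          2 ^ a * bit a (cG Q (n + 2) j) := by
      intro a _
      congr 1
      by_cases hb : bit a (cG Q (n + 2) j) = 1
      · rw [hb, if_pos]
        rw [mem_outG_val, u_mul_pow hj, v_mul_pow hj]
        refine ⟨Nat.mul_pos (pow_pos two_pos a) hj0, ?_, hb⟩
        have h1 : 2 ^ a ≤ cG Q (n + 2) j := pow_le_of_bit hb
        have h2 : cG Q (n + 2) j * j ≤ n := cG_le hQpos hQsum hCe hjg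
        calc 2 ^ a * j ≤ cG Q (n + 2) j * j := Nat.mul_le_mul_right _ h1
          _ ≤ n := h2
      · have hb0 : bit a (cG Q (n + 2) j) = 0 := by
          have := bit_le_one a (cG Q (n + 2) j); omega
        rw [hb0, if_neg]
        intro hmem
        rw [mem_outG_val, u_mul_pow hj, v_mul_pow hj] at hmem
        exact hb hmem.2.2
    rw [cF, Finset.sum_congr rfl hstep]
    apply recomp_lt
    have h2 : cG Q (n + 2) j * j ≤ n := cG_le hQpos hQsum hCe hjg
    have h3 : cG Q (n + 2) j ≤ n := le_trans (Nat.le_mul_of_pos_right _ hj0) h2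
    have h4 : (n : ℕ) < 2 ^ (n + 1) := n_lt_pow
    omega
  · have hcg0 : cG Q (n + 2) j = 0 := cG_eq_zero hj hjg
    rw [hcg0, cF]
    apply Finset.sum_eq_zero
    intro a _
    rw [if_neg, mul_zero]
    intro hmem
    rw [mem_outG_val, u_mul_pow hj, v_mul_pow hj, hcg0] at hmem
    simp [bit] at hmem

lemma c'F_outG (hQpos : ∀ i ∈ Q, 0 < i) (hQsum : Q.sum = n + 1) (hCe : Even Q.sup)
    (hn : 0 < n) {j : ℕ} (hj : ¬ 2 ∣ j) (hj0 : 0 < j) :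
    c'F ((outG Q (n + 2) n).val) (n + 1) j = dG Q (n + 2) j := by
  rw [c'F, cF_outG hQpos hQsum hCe hj hj0, MF_outG hQpos hQsum hCe hn, cG]
  by_cases h : j = Q.sup - 1
  · rw [if_pos h]
    omega
  · rw [if_neg h]
    omega

end RT2

section RT2b

variable {Q : Multiset ℕ} {n : ℕ}

lemma count_rt2 (hQpos : ∀ i ∈ Q, 0 < i) (hQsum : Q.sum = n + 1) (hCe : Even Q.sup)
    (hC1 : ∀ a ∈ Q, 2 * a ≤ Q.sup → Q.count a = 1) (hn : 0 < n) (k : ℕ) :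
    (outF ((outG Q (n + 2) n).val) (n + 1)).count k = Q.count k := by
  have hPpos : ∀ i ∈ (outG Q (n + 2) n).val, 0 < i := outG_pos
  have hSF : SF ((outG Q (n + 2) n).val) = Q.sup := SF_outG hQpos hQsum hCe hn
  have hS1 : 1 ≤ Q.sup := S_pos hQpos hQsum
  have hSle : Q.sup ≤ n + 1 := S_le hQsum
  rcases Nat.eq_zero_or_pos k with rfl | hk0
  · rw [count_outF hPpos, if_neg (by rw [hSF]; omega), u_zero,
      if_neg (fun h => absurd (JF_pos hPpos h) (by omega)), Multiset.count_eq_zero.mpr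
      (fun h => absurd (hQpos 0 h) (by omega))]
  · have hj : ¬ 2 ∣ u k := u_odd (by omega)
    have hj0 : 0 < u k := u_pos (by omega)
    have hkey : 2 ^ v k * u k = k := pow_v_mul_u k
    rcases lt_trichotomy Q.sup k with hlt | heq | hgt
    · rw [count_outF_eq_zero hPpos (by rw [hSF]; omega)]
      rw [Multiset.count_eq_zero.mpr]
      intro hmem
      exact absurd (Multiset.le_sup hmem) (by omega)
    · -- k = Q.sup
      subst heq
      have huSle : u Q.sup ≤ Q.sup := u_le _
      have htu : tJ Q.sup (u Q.sup) = v Q.sup := tJ_uS (by omega)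
      have hdivS := div_dG hQsum hC1 hj hj0 huSle
      rw [if_pos rfl, htu, hkey] at hdivS
      have hcS := count_S_pos hQsum
      rw [count_outF hPpos, if_pos hSF.symm, hSF,
        c'F_outG hQpos hQsum hCe hn hj hj0, htu, if_pos rfl, hdivS]
      by_cases hJ : u Q.sup ∈ JF ((outG Q (n + 2) n).val)
      · rw [if_pos hJ]
        omega
      · rw [if_neg hJ]
        have hcG0 : cG Q (n + 2) (u Q.sup) = 0 := by
          by_contra hne
          exact hJ ((JF_outG_iff hQpos hQsum hCe hj hj0).mpr ⟨uS_mem_JG hQsum, hne⟩)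
        have hdG0 : dG Q (n + 2) (u Q.sup) = 0 := by
          have := dG_le_cG (Q := Q) (n := n) (j := u Q.sup)
          omega
        rw [hdG0, Nat.zero_div] at hdivS
        omega
    · -- k < Q.sup
      have hjS : u k ≤ Q.sup := le_trans (u_le k) (by omega)
      have hkne : k ≠ SF ((outG Q (n + 2) n).val) := by rw [hSF]; omega
      have hcount0 : u k ∉ JG Q → Q.count k = 0 := by
        intro hJG
        rw [Multiset.count_eq_zero]
        intro hmem
        exact hJG (u_mem_JG hmem)
      rcases lt_trichotomy (v k) (tJ Q.sup (u k)) with hv | hv | hv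
      · -- v k < tJ : bit position
        have hbit := bit_dG hQsum hC1 hj hj0 hjS hv
        rw [hkey] at hbit
        rw [count_outF hPpos, if_neg hkne, hSF, c'F_outG hQpos hQsum hCe hn hj hj0]
        by_cases hJ : u k ∈ JF ((outG Q (n + 2) n).val)
        · rw [if_pos hJ, if_neg (show ¬ v k = tJ Q.sup (u k) by omega), if_pos hv, hbit, Nat.zero_add]
        · rw [if_neg hJ]
          by_cases hJG : u k ∈ JG Q
          · have hcG0 : cG Q (n + 2) (u k) = 0 := by
              by_contra hne
              exact hJ ((JF_outG_iff hQpos hQsum hCe hj hj0).mpr ⟨hJG, hne⟩)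
            have hdG0 : dG Q (n + 2) (u k) = 0 := by
              have := dG_le_cG (Q := Q) (n := n) (j := u k)
              omega
            rw [hdG0] at hbit
            simp only [bit, Nat.zero_div, Nat.zero_mod] at hbit
            omega
          · have := hcount0 hJG
            omega
      · -- v k = tJ
        have hne : u k ≠ u Q.sup := by
          intro h
          have hk' : k = Q.sup := by
            rw [← hkey, hv, h, tJ_uS (by omega), pow_v_mul_u]
          omega
        have hdiv := div_dG hQsum hC1 hj hj0 hjS
        rw [if_neg hne, Nat.sub_zero] at hdiv
        have hkk : 2 ^ tJ Q.sup (u k) * u k = k := by rw [← hv, hkey]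
        rw [hkk] at hdiv
        rw [count_outF hPpos, if_neg hkne, hSF, c'F_outG hQpos hQsum hCe hn hj hj0]
        by_cases hJ : u k ∈ JF ((outG Q (n + 2) n).val)
        · rw [if_pos hJ, if_pos hv, hdiv, Nat.zero_add]
        · rw [if_neg hJ]
          by_cases hJG : u k ∈ JG Q
          · have hcG0 : cG Q (n + 2) (u k) = 0 := by
              by_contra hne'
              exact hJ ((JF_outG_iff hQpos hQsum hCe hj hj0).mpr ⟨hJG, hne'⟩)
            have hdG0 : dG Q (n + 2) (u k) = 0 := by
              have := dG_le_cG (Q := Q) (n := n) (j := u k)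
              omega
            rw [hdG0, Nat.zero_div] at hdiv
            omega
          · have := hcount0 hJG
            omega
      · -- v k > tJ : impossible
        exfalso
        have h1 : Q.sup < 2 ^ (tJ Q.sup (u k) + 1) * u k := tJ_lt hj0 (by omega)
        have h2 : 2 ^ (tJ Q.sup (u k) + 1) * u k ≤ 2 ^ v k * u k :=
          Nat.mul_le_mul_right _ (Nat.pow_le_pow_right (by norm_num) (by omega))
        rw [hkey] at h2
        omega

lemma roundtrip2 (hQpos : ∀ i ∈ Q, 0 < i) (hQsum : Q.sum = n + 1) (hCe : Even Q.sup)
    (hC1 : ∀ a ∈ Q, 2 * a ≤ Q.sup → Q.count a = 1) (hn : 0 < n) :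
    outF ((outG Q (n + 2) n).val) (n + 1) = Q :=
  Multiset.ext.mpr (count_rt2 hQpos hQsum hCe hC1 hn)

end RT2b

section Final

variable {n : ℕ}

/-- Forward map: distinct partitions of `n` to C-partitions of `n+1`. -/
def Fpart (n : ℕ) (hn : 0 < n) (p : {p : n.Partition // p.parts.Nodup}) :
    {q : (n + 1).Partition // Even q.parts.sup ∧
      ∀ a ∈ q.parts, 2 * a ≤ q.parts.sup → q.parts.count a = 1} := by
  have hpos : ∀ i ∈ p.1.parts, 0 < i := fun i hi => p.1.parts_pos hi
  have hnd := p.2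
  have hsum := p.1.parts_sum
  refine ⟨⟨outF p.1.parts (n + 1), ?_, ?_⟩, ?_, ?_⟩
  · intro i hi
    exact pos_outF hpos hi
  · exact sum_outF hpos hnd hsum hn
  · show Even ((outF p.1.parts (n + 1)).sup)
    rw [sup_outF hpos]
    exact even_SF hpos hsum hn
  · intro a ha hle
    show (outF p.1.parts (n + 1)).count a = 1
    rw [sup_outF hpos] at hle
    apply le_antisymm (count_outF_le_one hpos hle)
    exact Multiset.one_le_count_iff_mem.mpr ha

/-- Backward map. -/
def Gpart (n : ℕ) (hn : 0 < n) (q : {q : (n + 1).Partition // Even q.parts.sup ∧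
      ∀ a ∈ q.parts, 2 * a ≤ q.parts.sup → q.parts.count a = 1}) :
    {p : n.Partition // p.parts.Nodup} := by
  have hQpos : ∀ i ∈ q.1.parts, 0 < i := fun i hi => q.1.parts_pos hi
  have hQsum := q.1.parts_sum
  refine ⟨⟨(outG q.1.parts (n + 2) n).val, ?_, ?_⟩, ?_⟩
  · intro i hi
    exact outG_pos i hi
  · exact outG_sum hQpos hQsum q.2.1
  · exact (outG q.1.parts (n + 2) n).nodup

lemma left_inv_FG (hn : 0 < n) (p : {p : n.Partition // p.parts.Nodup}) :
    Gpart n hn (Fpart n hn p) = p := by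
  apply Subtype.ext
  apply Nat.Partition.ext
  show (outG (outF p.1.parts (n + 1)) (n + 2) n).val = p.1.parts
  exact roundtrip1 (fun i hi => p.1.parts_pos hi) p.2 p.1.parts_sum hn

lemma right_inv_FG (hn : 0 < n) (q : {q : (n + 1).Partition // Even q.parts.sup ∧
      ∀ a ∈ q.parts, 2 * a ≤ q.parts.sup → q.parts.count a = 1}) :
    Fpart n hn (Gpart n hn q) = q := by
  apply Subtype.ext
  apply Nat.Partition.ext
  show outF ((outG q.1.parts (n + 2) n).val) (n + 1) = q.1.parts
  exact roundtrip2 (fun i hi => q.1.parts_pos hi) q.1.parts_sum q.2.1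
    (fun a ha h2 => q.2.2 a ha h2) hn

end Final

end AC

/-- `A n`: number of partitions of `n` into distinct parts. -/
noncomputable def A (n : ℕ) : ℕ := Nat.card {p : n.Partition // p.parts.Nodup}

/-- `C n`: number of partitions of `n` whose largest part is even and in which
every part not exceeding half of the largest part appears exactly once. -/
noncomputable def C (n : ℕ) : ℕ := Nat.card {p : n.Partition //
  Even p.parts.sup ∧ ∀ a ∈ p.parts, 2 * a ≤ p.parts.sup → p.parts.count a = 1}

/-- For every integer `n > 0`, `A n = C (n+1)`. -/
theorem A_eq_C_succ (n : ℕ) (hn : 0 < n) : A n = C (n + 1) := by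
  unfold A C
  exact Nat.card_congr
    { toFun := AC.Fpart n hn
      invFun := AC.Gpart n hn
      left_inv := AC.left_inv_FG hn
      right_inv := AC.right_inv_FG hn }
end

section
/- For every integer n > 0, B(n) = C(n+1); that is, the number of partitions of n into odd parts equals the number of partitions of n+1 whose largest part is even and in which every part not exceeding half of the largest part appears exactly once. -/
open Multiset Finset

/-- Fully split each part `a` into `2^(v₂ a)` copies of its odd part. -/
def mySplit (M : Multiset ℕ) : Multiset ℕ :=
  M.bind (fun a => Multiset.replicate (ordProj[2] a) (ordCompl[2] a))

/-- The multiplicity that part `s` should get when merging an odd multiset `ν`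
relative to the threshold `m`. -/
def coef (m : ℕ) (ν : Multiset ℕ) (s : ℕ) : ℕ :=
  if s ≤ m then (ν.count (ordCompl[2] s) / ordProj[2] s) % 2
  else ν.count (ordCompl[2] s) / ordProj[2] s

/-- Merge an odd multiset `ν` (parts `< 2m`) into a multiset with parts in `[1, 2m]`
where parts `≤ m` are distinct. -/
def myUnsplit (m : ℕ) (ν : Multiset ℕ) : Multiset ℕ :=
  ∑ s ∈ Finset.Icc 1 (2 * m), Multiset.replicate (coef m ν s) s

lemma oc_odd {a : ℕ} (ha : a ≠ 0) : Odd (ordCompl[2] a) := by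
  have := Nat.not_dvd_ordCompl Nat.prime_two ha
  rw [Nat.odd_iff, ← Nat.two_dvd_ne_zero]
  exact this

lemma oc_mul_pow (a : ℕ) : ordCompl[2] a * 2 ^ (a.factorization 2) = a := by
  rw [mul_comm]
  exact Nat.ordProj_mul_ordCompl_eq_self a 2

lemma oc_le (a : ℕ) : ordCompl[2] a ≤ a := Nat.ordCompl_le a 2

lemma oc_pos {a : ℕ} (ha : a ≠ 0) : 0 < ordCompl[2] a := Nat.ordCompl_pos 2 ha

lemma v2_of_odd_mul {o i : ℕ} (ho : Odd o) : (o * 2 ^ i).factorization 2 = i := by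
  have ho0 : o ≠ 0 := by rintro rfl; simp [Nat.odd_iff] at ho
  rw [Nat.factorization_mul ho0 (by positivity), Nat.Prime.factorization_pow Nat.prime_two]
  have : o.factorization 2 = 0 := by
    rw [Nat.factorization_eq_zero_iff]
    right; left
    rw [Nat.two_dvd_ne_zero, ← Nat.odd_iff]; exact ho
  simp [this]

lemma oc_of_odd_mul {o i : ℕ} (ho : Odd o) : ordCompl[2] (o * 2 ^ i) = o := by
  have h := v2_of_odd_mul ho (i := i)
  rw [h, mul_comm, Nat.mul_div_cancel_left _ (by positivity)]

lemma v2_lt {a c : ℕ} (ha : a ≠ 0) (hac : a ≤ c) : a.factorization 2 < c := by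
  have h1 : 2 ^ (a.factorization 2) ≤ a := Nat.ordProj_le 2 ha
  have h2 : a.factorization 2 < 2 ^ (a.factorization 2) := Nat.lt_two_pow_self
  omega

lemma count_unsplit (m : ℕ) (ν : Multiset ℕ) (a : ℕ) :
    (myUnsplit m ν).count a = if 1 ≤ a ∧ a ≤ 2 * m then coef m ν a else 0 := by
  rw [myUnsplit, Multiset.count_sum']
  simp only [Multiset.count_replicate]
  rw [Finset.sum_ite_eq' (Finset.Icc 1 (2*m)) a (coef m ν)]
  simp [Finset.mem_Icc]

lemma mem_unsplit {m : ℕ} {ν : Multiset ℕ} {a : ℕ} (h : a ∈ myUnsplit m ν) :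
    1 ≤ a ∧ a ≤ 2 * m := by
  by_contra hc
  have := count_unsplit m ν a
  rw [if_neg hc] at this
  rw [← Multiset.count_pos, this] at h
  omega

lemma count_unsplit_le_one {m : ℕ} {ν : Multiset ℕ} {a : ℕ} (ha : a ≤ m) :
    (myUnsplit m ν).count a ≤ 1 := by
  rw [count_unsplit, coef, if_pos ha]
  split <;> omega

lemma split_cons (a : ℕ) (M : Multiset ℕ) :
    mySplit (a ::ₘ M) = Multiset.replicate (ordProj[2] a) (ordCompl[2] a) + mySplit M :=
  Multiset.cons_bind _ _ _

lemma sum_split (M : Multiset ℕ) : (mySplit M).sum = M.sum := by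
  induction M using Multiset.induction_on with
  | empty => simp [mySplit]
  | cons a M ih =>
    rw [split_cons, Multiset.sum_add, ih, Multiset.sum_cons, Multiset.sum_replicate,
      smul_eq_mul, Nat.ordProj_mul_ordCompl_eq_self]

lemma mem_split {M : Multiset ℕ} {b : ℕ} (h : b ∈ mySplit M) :
    ∃ a ∈ M, b = ordCompl[2] a ∧ b ≤ a := by
  rw [mySplit, Multiset.mem_bind] at h
  obtain ⟨a, haM, hb⟩ := h
  rw [Multiset.eq_of_mem_replicate hb]
  exact ⟨a, haM, rfl, oc_le a⟩

/-- key reindexing: the contribution of a single part `a` to `count o (mySplit ·)`. -/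
lemma key_eq {m a o : ℕ} (ha1 : 1 ≤ a) (ha2 : a ≤ 2 * m) (ho : Odd o) :
    (∑ i ∈ Finset.range (2 * m), 2 ^ i * (if o * 2 ^ i = a then 1 else 0)) =
      if ordCompl[2] a = o then ordProj[2] a else 0 := by
  by_cases h : ordCompl[2] a = o
  · rw [if_pos h]
    rw [Finset.sum_eq_single (a.factorization 2)]
    · rw [if_pos, mul_one]
      rw [← h, oc_mul_pow]
    · intro i _ hi
      rw [if_neg, mul_zero]
      intro hcon
      apply hi
      have : o * 2 ^ i = o * 2 ^ (a.factorization 2) := by rw [hcon, ← h, oc_mul_pow]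
      have ho0 : 0 < o := by rcases ho with ⟨k, rfl⟩; omega
      have := Nat.eq_of_mul_eq_mul_left ho0 this
      exact Nat.pow_right_injective (le_refl 2) this
    · intro hcon
      exfalso
      exact hcon (Finset.mem_range.mpr (v2_lt (by omega) ha2))
  · rw [if_neg h]
    apply Finset.sum_eq_zero
    intro i _
    rw [if_neg, mul_zero]
    intro hcon
    apply h
    rw [← hcon, oc_of_odd_mul ho]

lemma count_split {m : ℕ} {M : Multiset ℕ} (hM : ∀ a ∈ M, 1 ≤ a ∧ a ≤ 2 * m)
    {o : ℕ} (ho : Odd o) :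
    (mySplit M).count o = ∑ i ∈ Finset.range (2 * m), 2 ^ i * M.count (o * 2 ^ i) := by
  induction M using Multiset.induction_on with
  | empty => simp [mySplit]
  | cons a M ih =>
    have ha := hM a (Multiset.mem_cons_self a M)
    rw [split_cons, Multiset.count_add, Multiset.count_replicate,
      ih (fun b hb => hM b (Multiset.mem_cons_of_mem hb))]
    simp only [Multiset.count_cons, Nat.mul_add, Finset.sum_add_distrib]
    rw [key_eq ha.1 ha.2 ho]
    omega

lemma digits_recompose (x t : ℕ) :
    (∑ i ∈ Finset.range t, 2 ^ i * (x / 2 ^ i % 2)) + 2 ^ t * (x / 2 ^ t) = x := by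
  induction t with
  | zero => simp
  | succ t ih =>
    rw [Finset.sum_range_succ]
    have h1 : x / 2 ^ (t + 1) = x / 2 ^ t / 2 := by
      rw [pow_succ, Nat.div_div_eq_div_mul]
    have h2 : 2 ^ t * (x / 2 ^ t % 2) + 2 ^ (t + 1) * (x / 2 ^ (t + 1)) =
        2 ^ t * (x / 2 ^ t) := by
      rw [h1, pow_succ]
      have := Nat.mod_add_div (x / 2 ^ t) 2
      calc 2 ^ t * (x / 2 ^ t % 2) + 2 ^ t * 2 * (x / 2 ^ t / 2)
          = 2 ^ t * ((x / 2 ^ t % 2) + 2 * (x / 2 ^ t / 2)) := by ring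
        _ = 2 ^ t * (x / 2 ^ t) := by rw [this]
    omega

lemma mem_split_bounds {m : ℕ} {M : Multiset ℕ} (hM : ∀ a ∈ M, 1 ≤ a ∧ a ≤ 2 * m)
    {b : ℕ} (h : b ∈ mySplit M) : Odd b ∧ 1 ≤ b ∧ b < 2 * m := by
  obtain ⟨a, haM, rfl, hle⟩ := mem_split h
  have ha := hM a haM
  have hodd : Odd (ordCompl[2] a) := oc_odd (by omega)
  have hpos : 0 < ordCompl[2] a := oc_pos (by omega)
  refine ⟨hodd, hpos, ?_⟩
  rcases Nat.lt_or_ge (ordCompl[2] a) (2 * m) with h' | h'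
  · exact h'
  · exfalso
    have : ordCompl[2] a = 2 * m := by omega
    rw [this, Nat.odd_iff] at hodd
    omega

theorem split_unsplit (m : ℕ) (ν : Multiset ℕ) (hν : ∀ a ∈ ν, Odd a ∧ a < 2 * m) :
    mySplit (myUnsplit m ν) = ν := by
  have hub : ∀ a ∈ myUnsplit m ν, 1 ≤ a ∧ a ≤ 2 * m := fun a ha => mem_unsplit ha
  ext b
  by_cases hb : Odd b ∧ 1 ≤ b ∧ b < 2 * m
  · obtain ⟨hbo, hb1, hb2⟩ := hb
    rw [count_split hub hbo]
    -- let t be the least i with m < b * 2 ^ i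
    have hex : ∃ i, m < b * 2 ^ i := ⟨2 * m, by
      have : 2 * m < 2 ^ (2 * m) := Nat.lt_two_pow_self
      nlinarith⟩
    set t := Nat.find hex with ht
    have htspec : m < b * 2 ^ t := Nat.find_spec hex
    have htmin : ∀ i < t, ¬ m < b * 2 ^ i := fun i hi => Nat.find_min hex hi
    have ht2 : b * 2 ^ t ≤ 2 * m := by
      rcases Nat.eq_zero_or_pos t with h0 | h0
      · rw [h0]; simpa using (by omega : b ≤ 2 * m)
      · have := htmin (t - 1) (by omega)
        have he : b * 2 ^ t = 2 * (b * 2 ^ (t - 1)) := by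
          have ht1 : t - 1 + 1 = t := by omega
          have hp : (2:ℕ) ^ t = 2 * 2 ^ (t - 1) := by
            conv_lhs => rw [← ht1]
            rw [pow_succ]; ring
          rw [hp]; ring
        omega
    have htlt : t < 2 * m := by
      have h1 : 2 ^ t ≤ b * 2 ^ t := Nat.le_mul_of_pos_left _ hb1
      have h2 : t < 2 ^ t := Nat.lt_two_pow_self
      omega
    set x := ν.count b with hx
    have hterm : ∀ i ∈ Finset.range (2 * m),
        2 ^ i * (myUnsplit m ν).count (b * 2 ^ i) =
        if i < t then 2 ^ i * (x / 2 ^ i % 2) else if i = t then 2 ^ t * (x / 2 ^ t) else 0 := by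
      intro i _
      rw [count_unsplit]
      rcases Nat.lt_trichotomy i t with hit | hit | hit
      · have hle : b * 2 ^ i ≤ m := by have := htmin i hit; omega
        rw [if_pos ⟨Nat.one_le_iff_ne_zero.mpr (by positivity), by omega⟩, coef,
          if_pos hle, oc_of_odd_mul hbo, v2_of_odd_mul hbo, if_pos hit]
      · subst hit
        rw [if_pos ⟨Nat.one_le_iff_ne_zero.mpr (by positivity), ht2⟩, coef,
          if_neg (by omega), oc_of_odd_mul hbo, v2_of_odd_mul hbo,
          if_neg (lt_irrefl _), if_pos rfl]
      · have hgt : 2 * m < b * 2 ^ i := by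
          have he : b * 2 ^ t * 2 ≤ b * 2 ^ i := by
            have : 2 ^ (t + 1) ≤ 2 ^ i := Nat.pow_le_pow_right (by norm_num) hit
            calc b * 2 ^ t * 2 = b * 2 ^ (t + 1) := by rw [pow_succ]; ring
              _ ≤ b * 2 ^ i := Nat.mul_le_mul_left b this
          omega
        rw [if_neg (by omega), mul_zero, if_neg (by omega), if_neg (by omega)]
    rw [Finset.sum_congr rfl hterm]
    have hsub : Finset.range (t + 1) ⊆ Finset.range (2 * m) := by
      intro i hi; simp only [Finset.mem_range] at *; omega
    rw [← Finset.sum_subset hsub (by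
      intro i _ hi
      simp only [Finset.mem_range, not_lt] at hi
      rw [if_neg (by omega), if_neg (by omega)])]
    rw [Finset.sum_range_succ, if_neg (lt_irrefl t), if_pos rfl]
    rw [Finset.sum_congr rfl (fun i hi => by
      rw [if_pos (Finset.mem_range.mp hi)])]
    exact digits_recompose x t
  · have h1 : (mySplit (myUnsplit m ν)).count b = 0 := by
      rw [Multiset.count_eq_zero]
      intro hmem
      exact hb (mem_split_bounds hub hmem)
    have h2 : ν.count b = 0 := by
      rw [Multiset.count_eq_zero]
      intro hmem
      have := hν b hmem
      have hb1 : 1 ≤ b := by rcases this.1 with ⟨k, rfl⟩; omega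
      exact hb ⟨this.1, hb1, this.2⟩
    rw [h1, h2]

lemma sum_range_two_pow (v : ℕ) : (∑ i ∈ Finset.range v, 2 ^ i) = 2 ^ v - 1 := by
  induction v with
  | zero => simp
  | succ v ih =>
    rw [Finset.sum_range_succ, ih]
    have : 1 ≤ 2 ^ v := Nat.one_le_two_pow
    have : 2 ^ (v + 1) = 2 * 2 ^ v := by rw [pow_succ]; ring
    omega

theorem unsplit_split (m : ℕ) (M : Multiset ℕ) (hM : ∀ a ∈ M, 1 ≤ a ∧ a ≤ 2 * m)
    (hs : ∀ a : ℕ, 2 * a ≤ 2 * m → M.count a ≤ 1) :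
    myUnsplit m (mySplit M) = M := by
  ext b
  rw [count_unsplit]
  by_cases hb : 1 ≤ b ∧ b ≤ 2 * m
  · rw [if_pos hb]
    obtain ⟨hb1, hb2⟩ := hb
    set o := ordCompl[2] b with ho'
    set v := b.factorization 2 with hv'
    have hob : o * 2 ^ v = b := oc_mul_pow b
    have ho : Odd o := oc_odd (by omega)
    have hvlt : v < 2 * m := v2_lt (by omega) hb2
    have hy : (mySplit M).count o = ∑ i ∈ Finset.range (2 * m), 2 ^ i * M.count (o * 2 ^ i) :=
      count_split hM ho
    set A := ∑ i ∈ Finset.range v, 2 ^ i * M.count (o * 2 ^ i) with hA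
    set Bs := ∑ j ∈ Finset.range (2 * m - v), 2 ^ j * M.count (b * 2 ^ j) with hB
    have hsplitsum : (∑ i ∈ Finset.range (2 * m), 2 ^ i * M.count (o * 2 ^ i)) =
        A + 2 ^ v * Bs := by
      conv_lhs => rw [Finset.range_eq_Ico,
        ← Finset.sum_Ico_consecutive _ (Nat.zero_le v) (le_of_lt hvlt)]
      congr 1
      · rw [hA, Finset.range_eq_Ico]
      · rw [Finset.sum_Ico_eq_sum_range, hB, Finset.mul_sum]
        apply Finset.sum_congr rfl
        intro j _
        have h1 : o * 2 ^ (v + j) = b * 2 ^ j := by rw [← hob, pow_add]; ring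
        rw [h1, pow_add]; ring
    have hAlt : A < 2 ^ v := by
      have hle : A ≤ ∑ i ∈ Finset.range v, 2 ^ i := by
        rw [hA]
        apply Finset.sum_le_sum
        intro i hi
        have hiv : i < v := Finset.mem_range.mp hi
        have hsmall : 2 * (o * 2 ^ i) ≤ 2 * m := by
          have : o * 2 ^ i * 2 ≤ o * 2 ^ v := by
            have h2 : 2 ^ (i + 1) ≤ 2 ^ v := Nat.pow_le_pow_right (by norm_num) hiv
            calc o * 2 ^ i * 2 = o * 2 ^ (i + 1) := by rw [pow_succ]; ring
              _ ≤ o * 2 ^ v := Nat.mul_le_mul_left o h2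
          omega
        have := hs (o * 2 ^ i) hsmall
        calc 2 ^ i * M.count (o * 2 ^ i) ≤ 2 ^ i * 1 := Nat.mul_le_mul_left _ this
          _ = 2 ^ i := mul_one _
      have h1 := sum_range_two_pow v
      have h2 : (1:ℕ) ≤ 2 ^ v := Nat.one_le_two_pow
      omega
    have hdiv : (mySplit M).count o / 2 ^ v = Bs := by
      rw [hy, hsplitsum, Nat.add_mul_div_left _ _ (by positivity),
        Nat.div_eq_of_lt hAlt, zero_add]
    have hK : 1 ≤ 2 * m - v := by omega
    have hBsplit : Bs = M.count b + 2 * (∑ j ∈ Finset.range (2 * m - v - 1),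
        2 ^ j * M.count (b * 2 ^ (j + 1))) := by
      rw [hB]
      have h1 : 2 * m - v = (2 * m - v - 1) + 1 := by omega
      rw [h1, Finset.sum_range_succ']
      simp only [pow_zero, one_mul, mul_one]
      rw [Nat.add_comm]
      congr 1
      rw [Finset.mul_sum]
      apply Finset.sum_congr rfl
      intro j _
      rw [pow_succ]; ring
    rw [coef, ← ho', ← hv', hdiv]
    by_cases hbm : b ≤ m
    · rw [if_pos hbm, hBsplit]
      have : M.count b ≤ 1 := hs b (by omega)
      omega
    · rw [if_neg hbm, hBsplit]
      have hz : (∑ j ∈ Finset.range (2 * m - v - 1), 2 ^ j * M.count (b * 2 ^ (j + 1))) = 0 := by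
        apply Finset.sum_eq_zero
        intro j _
        have : M.count (b * 2 ^ (j + 1)) = 0 := by
          rw [Multiset.count_eq_zero]
          intro hmem
          have := (hM _ hmem).2
          have h2 : 2 * b ≤ b * 2 ^ (j + 1) := by
            have h3 : 2 ≤ 2 ^ (j + 1) := by
              calc 2 = 2 ^ 1 := (pow_one 2).symm
                _ ≤ 2 ^ (j + 1) := Nat.pow_le_pow_right (by norm_num) (by omega)
            nlinarith
          omega
        rw [this, mul_zero]
      omega
  · rw [if_neg hb, eq_comm, Multiset.count_eq_zero]
    intro hmem
    exact hb (hM b hmem)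

lemma sup_mem_of_ne_zero {s : Multiset ℕ} (h : s ≠ 0) : s.sup ∈ s := by
  induction s using Multiset.induction_on with
  | empty => exact absurd rfl h
  | cons a t ih =>
    rw [Multiset.sup_cons]
    by_cases ht : t = 0
    · subst ht; simp
    · rcases le_total a t.sup with hle | hle
      · rw [sup_eq_right.mpr hle]
        exact Multiset.mem_cons_of_mem (ih ht)
      · rw [sup_eq_left.mpr hle]
        exact Multiset.mem_cons_self a t

/-- Forward map on multisets: odd partition ↦ C-partition (adds 1 to total). -/
def fwdParts (s : Multiset ℕ) : Multiset ℕ :=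
  (s.sup + 1) ::ₘ myUnsplit ((s.sup + 1) / 2) (s.erase s.sup)

/-- Backward map on multisets: C-partition ↦ odd partition (subtracts 1 from total). -/
def bwdParts (s : Multiset ℕ) : Multiset ℕ :=
  (s.sup - 1) ::ₘ mySplit (s.erase s.sup)

lemma fwd_all {n : ℕ} (hn : 0 < n) (s : Multiset ℕ) (hsum : s.sum = n)
    (hodd : ∀ a ∈ s, Odd a) :
    (∀ a ∈ fwdParts s, 0 < a) ∧ (fwdParts s).sum = n + 1 ∧
      Even (fwdParts s).sup ∧
      (∀ a ∈ fwdParts s, 2 * a ≤ (fwdParts s).sup → (fwdParts s).count a = 1) ∧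
      bwdParts (fwdParts s) = s := by
  have hs0 : s ≠ 0 := by rintro rfl; simp at hsum; omega
  have hMmem : s.sup ∈ s := sup_mem_of_ne_zero hs0
  have hModd : Odd s.sup := hodd _ hMmem
  obtain ⟨k, hk⟩ := hModd
  set m := (s.sup + 1) / 2 with hm
  have hm1 : s.sup = 2 * m - 1 ∧ s.sup + 1 = 2 * m ∧ 1 ≤ m := by omega
  set rest := s.erase s.sup with hrest
  have hrest_sub : ∀ a ∈ rest, a ∈ s := fun a ha => Multiset.mem_of_mem_erase ha
  have hrest_bound : ∀ a ∈ rest, Odd a ∧ a < 2 * m := by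
    intro a ha
    refine ⟨hodd a (hrest_sub a ha), ?_⟩
    have := Multiset.le_sup (hrest_sub a ha)
    omega
  set Y := myUnsplit m rest with hY
  have hYmem : ∀ a ∈ Y, 1 ≤ a ∧ a ≤ 2 * m := fun a ha => mem_unsplit ha
  have hT1 : mySplit Y = rest := split_unsplit m rest hrest_bound
  have hsumY : Y.sum = rest.sum := by rw [← hT1, sum_split]
  have hsumrest : s.sup + rest.sum = n := by
    have := Multiset.cons_erase hMmem
    calc s.sup + rest.sum = (s.sup ::ₘ rest).sum := (Multiset.sum_cons _ _).symm
      _ = s.sum := by rw [hrest, this]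
      _ = n := hsum
  have hfwd : fwdParts s = (2 * m) ::ₘ Y := by
    rw [fwdParts, ← hm, hm1.2.1, ← hrest, ← hY]
  have hsupY : Y.sup ≤ 2 * m := Multiset.sup_le.mpr (fun b hb => (hYmem b hb).2)
  have hsupfwd : (fwdParts s).sup = 2 * m := by
    rw [hfwd, Multiset.sup_cons]
    exact sup_eq_left.mpr hsupY
  refine ⟨?_, ?_, ?_, ?_, ?_⟩
  · intro a ha
    rw [hfwd, Multiset.mem_cons] at ha
    rcases ha with rfl | ha
    · omega
    · exact (hYmem a ha).1
  · rw [hfwd, Multiset.sum_cons, hsumY]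
    omega
  · rw [hsupfwd]; exact ⟨m, by ring⟩
  · intro a ha h2a
    rw [hsupfwd] at h2a
    have hane : a ≠ 2 * m := by
      rw [hfwd, Multiset.mem_cons] at ha
      rcases ha with rfl | ha
      · omega
      · have := (hYmem a ha).1; omega
    have haY : a ∈ Y := by
      rw [hfwd, Multiset.mem_cons] at ha
      rcases ha with rfl | ha
      · omega
      · exact ha
    have hcount : (fwdParts s).count a = Y.count a := by
      rw [hfwd, Multiset.count_cons_of_ne hane]
    have hle1 : Y.count a ≤ 1 := count_unsplit_le_one (by omega)
    have hge1 : 1 ≤ Y.count a := Multiset.one_le_count_iff_mem.mpr haY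
    omega
  · rw [bwdParts, hsupfwd, hfwd]
    have : ((2 * m) ::ₘ Y).erase (2 * m) = Y := Multiset.erase_cons_head _ _
    rw [this, hT1, ← hm1.1]
    exact Multiset.cons_erase hMmem

lemma bwd_all {n : ℕ} (s : Multiset ℕ) (hsum : s.sum = n + 1) (hpos : ∀ a ∈ s, 0 < a)
    (he : Even s.sup) (hc : ∀ a ∈ s, 2 * a ≤ s.sup → s.count a = 1) :
    (∀ a ∈ bwdParts s, Odd a) ∧ (bwdParts s).sum = n ∧ fwdParts (bwdParts s) = s := by
  have hs0 : s ≠ 0 := by rintro rfl; simp at hsum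
  have hMmem : s.sup ∈ s := sup_mem_of_ne_zero hs0
  obtain ⟨k, hk⟩ := he
  set m := s.sup / 2 with hm
  have hm1 : s.sup = 2 * m ∧ 1 ≤ m := by
    have := hpos _ hMmem
    omega
  set rest := s.erase s.sup with hrest
  have hrest_sub : ∀ a ∈ rest, a ∈ s := fun a ha => Multiset.mem_of_mem_erase ha
  have hrest_bound : ∀ a ∈ rest, 1 ≤ a ∧ a ≤ 2 * m := by
    intro a ha
    have h1 := hpos a (hrest_sub a ha)
    have h2 := Multiset.le_sup (hrest_sub a ha)
    omega
  have hrest_small : ∀ a : ℕ, 2 * a ≤ 2 * m → rest.count a ≤ 1 := by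
    intro a h2a
    have hle : rest.count a ≤ s.count a :=
      Multiset.count_le_of_le a (Multiset.erase_le _ _)
    by_cases hmem : a ∈ s
    · have := hc a hmem (by omega)
      omega
    · have h0 : s.count a = 0 := Multiset.count_eq_zero.mpr hmem
      omega
  set ν := mySplit rest with hν
  have hνbound : ∀ b ∈ ν, Odd b ∧ 1 ≤ b ∧ b < 2 * m :=
    fun b hb => mem_split_bounds hrest_bound hb
  have hT2 : myUnsplit m ν = rest := unsplit_split m rest hrest_bound hrest_small
  have hsumν : ν.sum = rest.sum := sum_split rest
  have hsumrest : s.sup + rest.sum = n + 1 := by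
    have := Multiset.cons_erase hMmem
    calc s.sup + rest.sum = (s.sup ::ₘ rest).sum := (Multiset.sum_cons _ _).symm
      _ = s.sum := by rw [hrest, this]
      _ = n + 1 := hsum
  have hbwd : bwdParts s = (2 * m - 1) ::ₘ ν := by
    rw [bwdParts, ← hrest, ← hν, hm1.1]
  have hsupν : ν.sup ≤ 2 * m - 1 := Multiset.sup_le.mpr (fun b hb => by
    have := hνbound b hb; omega)
  have hsupbwd : (bwdParts s).sup = 2 * m - 1 := by
    rw [hbwd, Multiset.sup_cons]
    exact sup_eq_left.mpr hsupν
  refine ⟨?_, ?_, ?_⟩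
  · intro a ha
    rw [hbwd, Multiset.mem_cons] at ha
    rcases ha with rfl | ha
    · exact ⟨m - 1, by omega⟩
    · exact (hνbound a ha).1
  · rw [hbwd, Multiset.sum_cons, hsumν]
    omega
  · rw [fwdParts, hsupbwd]
    have h1 : 2 * m - 1 + 1 = 2 * m := by omega
    have h2 : 2 * m / 2 = m := by omega
    rw [h1, h2, hbwd]
    have : ((2 * m - 1) ::ₘ ν).erase (2 * m - 1) = ν := Multiset.erase_cons_head _ _
    rw [this, hT2, ← hm1.1]
    exact Multiset.cons_erase hMmem

/-- `B n`: number of partitions of `n` into odd parts. -/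
noncomputable def B (n : ℕ) : ℕ := Nat.card {p : n.Partition // ∀ a ∈ p.parts, Odd a}

/-- For every integer `n > 0`, `B n = C (n+1)`. -/
theorem B_eq_C_succ (n : ℕ) (hn : 0 < n) : B n = C (n + 1) := by
  rw [B, C]
  apply Nat.card_congr
  exact
    { toFun := fun p =>
        ⟨⟨fwdParts p.1.parts,
          fun {i} hi => (fwd_all hn p.1.parts p.1.parts_sum p.2).1 i hi,
          (fwd_all hn p.1.parts p.1.parts_sum p.2).2.1⟩,
          (fwd_all hn p.1.parts p.1.parts_sum p.2).2.2.1,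
          (fwd_all hn p.1.parts p.1.parts_sum p.2).2.2.2.1⟩
      invFun := fun q =>
        ⟨⟨bwdParts q.1.parts,
          fun {i} hi => by
            have := (bwd_all q.1.parts q.1.parts_sum
              (fun a ha => q.1.parts_pos ha) q.2.1 q.2.2).1 i hi
            rcases this with ⟨k, hk⟩; omega,
          (bwd_all q.1.parts q.1.parts_sum
            (fun a ha => q.1.parts_pos ha) q.2.1 q.2.2).2.1⟩,
          (bwd_all q.1.parts q.1.parts_sum
            (fun a ha => q.1.parts_pos ha) q.2.1 q.2.2).1⟩
      left_inv := fun p => Subtype.ext (Nat.Partition.ext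
        ((fwd_all hn p.1.parts p.1.parts_sum p.2).2.2.2.2))
      right_inv := fun q => Subtype.ext (Nat.Partition.ext
        ((bwd_all q.1.parts q.1.parts_sum
          (fun a ha => q.1.parts_pos ha) q.2.1 q.2.2).2.2)) }
end

section
/- For every integer n > 0, 2·A(n) = D(n+1); that is, twice the number of partitions of n into distinct parts equals the number of partitions of n+1 in which every part appears exactly once except possibly the smallest part, which may appear at most twice. -/
/-- `D n`: number of partitions of `n` in which every part appears exactly once,
except possibly the smallest part, which may appear once or twice. -/
noncomputable def D (n : ℕ) : ℕ := Nat.card {p : n.Partition //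
  ∀ a ∈ p.parts, p.parts.count a = 1 ∨
    (p.parts.count a = 2 ∧ ∀ b ∈ p.parts, a ≤ b)}

namespace TwoAD

def Dcond {n : ℕ} (q : n.Partition) : Prop :=
  ∀ a ∈ q.parts, q.parts.count a = 1 ∨
    (q.parts.count a = 2 ∧ ∀ b ∈ q.parts, a ≤ b)

noncomputable def msmin (m : Multiset ℕ) : ℕ := sInf {a | a ∈ m}

lemma msmin_mem {m : Multiset ℕ} (h : m ≠ 0) : msmin m ∈ m := by
  obtain ⟨a, ha⟩ := Multiset.exists_mem_of_ne_zero h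
  exact Nat.sInf_mem ⟨a, show a ∈ {x : ℕ | x ∈ m} from ha⟩

lemma msmin_le {m : Multiset ℕ} {a : ℕ} (h : a ∈ m) : msmin m ≤ a := Nat.sInf_le h

lemma parts_ne_zero {n : ℕ} (hn : 0 < n) (p : n.Partition) : p.parts ≠ 0 := by
  intro h
  have := p.parts_sum
  rw [h] at this
  simp at this
  omega

/-- Forward map, bit = false : add a part `1`. -/
def F0 {n : ℕ} (p : n.Partition) : (n + 1).Partition where
  parts := 1 ::ₘ p.parts
  parts_pos := by
    intro i hi
    rcases Multiset.mem_cons.1 hi with h | h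
    · omega
    · exact p.parts_pos h
  parts_sum := by
    rw [Multiset.sum_cons, p.parts_sum]; omega

/-- Forward map, bit = true : increment the smallest part. -/
noncomputable def F1 {n : ℕ} (hn : 0 < n) (p : n.Partition) : (n + 1).Partition where
  parts := (msmin p.parts + 1) ::ₘ p.parts.erase (msmin p.parts)
  parts_pos := by
    intro i hi
    rcases Multiset.mem_cons.1 hi with h | h
    · omega
    · exact p.parts_pos (Multiset.mem_of_mem_erase h)
  parts_sum := by
    have hs : msmin p.parts ∈ p.parts := msmin_mem (parts_ne_zero hn p)
    have h1 : msmin p.parts ::ₘ p.parts.erase (msmin p.parts) = p.parts :=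
      Multiset.cons_erase hs
    have h2 : msmin p.parts + (p.parts.erase (msmin p.parts)).sum = n := by
      rw [← Multiset.sum_cons, h1, p.parts_sum]
    rw [Multiset.sum_cons]; omega

lemma DF0 {n : ℕ} (p : n.Partition) (hp : p.parts.Nodup) : Dcond (F0 p) := by
  intro a ha
  simp only [F0] at ha ⊢
  rcases Multiset.mem_cons.1 ha with h | h
  · subst h
    by_cases h1 : 1 ∈ p.parts
    · right
      constructor
      · rw [Multiset.count_cons_self, Multiset.count_eq_one_of_mem hp h1]
      · intro b hb
        rcases Multiset.mem_cons.1 hb with h | h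
        · omega
        · exact p.parts_pos h
    · left
      rw [Multiset.count_cons_self, Multiset.count_eq_zero_of_notMem h1]
  · by_cases h1 : a = 1
    · subst h1
      right
      constructor
      · rw [Multiset.count_cons_self, Multiset.count_eq_one_of_mem hp h]
      · intro b hb
        rcases Multiset.mem_cons.1 hb with hb | hb
        · omega
        · exact p.parts_pos hb
    · left
      rw [Multiset.count_cons_of_ne h1, Multiset.count_eq_one_of_mem hp h]

lemma mem_erase_msmin_ge {m : Multiset ℕ} (hm : m.Nodup) {b : ℕ}
    (hb : b ∈ m.erase (msmin m)) : msmin m + 1 ≤ b := by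
  have hbm : b ∈ m := Multiset.mem_of_mem_erase hb
  have hle : msmin m ≤ b := msmin_le hbm
  have hne : b ≠ msmin m := by
    intro h
    rw [h] at hb hbm
    have hc := Multiset.count_eq_one_of_mem hm hbm
    have h2 := Multiset.count_erase_self (msmin m) m
    have h3 : 0 < (m.erase (msmin m)).count (msmin m) := Multiset.count_pos.2 hb
    omega
  omega

lemma DF1 {n : ℕ} (hn : 0 < n) (p : n.Partition) (hp : p.parts.Nodup) :
    Dcond (F1 hn p) := by
  intro a ha
  simp only [F1] at ha ⊢
  set s := msmin p.parts with hs
  by_cases h1 : a = s + 1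
  · subst h1
    by_cases h2 : s + 1 ∈ p.parts.erase s
    · right
      constructor
      · rw [Multiset.count_cons_self,
          Multiset.count_eq_one_of_mem (hp.erase s) h2]
      · intro b hb
        rcases Multiset.mem_cons.1 hb with hb | hb
        · omega
        · exact mem_erase_msmin_ge hp hb
    · left
      rw [Multiset.count_cons_self, Multiset.count_eq_zero_of_notMem h2]
  · left
    have ha' : a ∈ p.parts.erase s := by
      rcases Multiset.mem_cons.1 ha with h | h
      · exact absurd h h1
      · exact h
    rw [Multiset.count_cons_of_ne h1,
      Multiset.count_eq_one_of_mem (hp.erase s) ha']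

/-- Backward map on partitions. -/
noncomputable def G {n : ℕ} (q : (n + 1).Partition) : n.Partition :=
  if h : 1 ∈ q.parts then
    { parts := q.parts.erase 1
      parts_pos := fun hi => q.parts_pos (Multiset.mem_of_mem_erase hi)
      parts_sum := by
        have h1 : (1 : ℕ) ::ₘ q.parts.erase 1 = q.parts := Multiset.cons_erase h
        have h2 : 1 + (q.parts.erase 1).sum = n + 1 := by
          rw [← Multiset.sum_cons, h1, q.parts_sum]
        omega }
  else
    { parts := (msmin q.parts - 1) ::ₘ q.parts.erase (msmin q.parts)
      parts_pos := by
        intro i hi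
        have hq0 : q.parts ≠ 0 := parts_ne_zero (by omega) q
        have hs : msmin q.parts ∈ q.parts := msmin_mem hq0
        have hs1 : msmin q.parts ≠ 1 := fun h' => h (by rw [h'] at hs; exact hs)
        have hspos : 0 < msmin q.parts := q.parts_pos hs
        rcases Multiset.mem_cons.1 hi with h' | h'
        · omega
        · exact q.parts_pos (Multiset.mem_of_mem_erase h')
      parts_sum := by
        have hq0 : q.parts ≠ 0 := parts_ne_zero (by omega) q
        have hs : msmin q.parts ∈ q.parts := msmin_mem hq0
        have hspos : 0 < msmin q.parts := q.parts_pos hs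
        have h1 : msmin q.parts ::ₘ q.parts.erase (msmin q.parts) = q.parts :=
          Multiset.cons_erase hs
        have h2 : msmin q.parts + (q.parts.erase (msmin q.parts)).sum = n + 1 := by
          rw [← Multiset.sum_cons, h1, q.parts_sum]
        rw [Multiset.sum_cons]; omega }

lemma GNodup {n : ℕ} (q : (n + 1).Partition) (hq : Dcond q) : (G q).parts.Nodup := by
  rw [Multiset.nodup_iff_count_le_one]
  intro a
  unfold G
  split_ifs with h
  · simp only
    by_cases ha : a = 1
    · subst ha
      have h2 : (q.parts.erase 1).count 1 = q.parts.count 1 - 1 :=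
        Multiset.count_erase_self 1 q.parts
      rcases hq 1 h with h' | ⟨h', _⟩ <;> omega
    · rw [Multiset.count_erase_of_ne ha]
      by_cases hm : a ∈ q.parts
      · rcases hq a hm with h' | ⟨h', hle⟩
        · omega
        · have := hle 1 h
          have := q.parts_pos hm
          omega
      · rw [Multiset.count_eq_zero_of_notMem hm]; omega
  · simp only
    have hq0 : q.parts ≠ 0 := parts_ne_zero (by omega) q
    have hs : msmin q.parts ∈ q.parts := msmin_mem hq0
    set s := msmin q.parts with hsdef
    clear_value s
    by_cases ha : a = s - 1
    · rw [ha]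
      have hnm : s - 1 ∉ q.parts := by
        intro h'
        have := msmin_le h'
        have : 0 < s := q.parts_pos hs
        have hs1 : s ≠ 1 := fun h'' => h (by rw [h''] at hs; exact hs)
        omega
      have : (s - 1) ∉ q.parts.erase s := fun h' => hnm (Multiset.mem_of_mem_erase h')
      rw [Multiset.count_cons_self, Multiset.count_eq_zero_of_notMem this]
    · rw [Multiset.count_cons_of_ne ha]
      by_cases has : a = s
      · rw [has, Multiset.count_erase_self]
        rcases hq s hs with h' | ⟨h', _⟩ <;> omega
      · rw [Multiset.count_erase_of_ne has]
        by_cases hm : a ∈ q.parts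
        · rcases hq a hm with h' | ⟨h', hle⟩
          · omega
          · have h1 : a ≤ s := hle s hs
            have h2 : s ≤ a := by rw [hsdef]; exact msmin_le hm
            omega
        · rw [Multiset.count_eq_zero_of_notMem hm]; omega

lemma one_notMem_F1 {n : ℕ} (hn : 0 < n) (p : n.Partition) (hp : p.parts.Nodup) :
    1 ∉ (F1 hn p).parts := by
  simp only [F1]
  intro h
  have hs : msmin p.parts ∈ p.parts := msmin_mem (parts_ne_zero hn p)
  have hspos : 0 < msmin p.parts := p.parts_pos hs
  rcases Multiset.mem_cons.1 h with h' | h'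
  · omega
  · have := mem_erase_msmin_ge hp h'
    omega

theorem two_A_eq_D_succ' (n : ℕ) (hn : 0 < n) : 2 * A n = D (n + 1) := by
  classical
  have e : (Bool × {p : n.Partition // p.parts.Nodup}) ≃
      {q : (n + 1).Partition // Dcond q} := by
    refine
      { toFun := fun x => cond x.1 ⟨F1 hn x.2.1, DF1 hn x.2.1 x.2.2⟩
          ⟨F0 x.2.1, DF0 x.2.1 x.2.2⟩
        invFun := fun q => (if 1 ∈ q.1.parts then false else true, ⟨G q.1, GNodup q.1 q.2⟩)
        left_inv := ?_
        right_inv := ?_ }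
    · rintro ⟨b, p, hp⟩
      cases b
      · -- bit false
        simp only [Bool.cond_false]
        have h1 : 1 ∈ (F0 p).parts := by simp [F0]
        rw [if_pos h1]
        refine Prod.ext rfl (Subtype.ext (Nat.Partition.ext ?_))
        show (G (F0 p)).parts = p.parts
        unfold G
        rw [dif_pos h1]
        show ((F0 p).parts).erase 1 = p.parts
        simp [F0]
      · -- bit true
        simp only [Bool.cond_true]
        have h1 : 1 ∉ (F1 hn p).parts := one_notMem_F1 hn p hp
        rw [if_neg h1]
        refine Prod.ext rfl (Subtype.ext (Nat.Partition.ext ?_))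
        show (G (F1 hn p)).parts = p.parts
        unfold G
        rw [dif_neg h1]
        show (msmin (F1 hn p).parts - 1) ::ₘ
          ((F1 hn p).parts).erase (msmin (F1 hn p).parts) = p.parts
        have hs : msmin p.parts ∈ p.parts := msmin_mem (parts_ne_zero hn p)
        set s := msmin p.parts with hsdef
        have hparts : (F1 hn p).parts = (s + 1) ::ₘ p.parts.erase s := rfl
        clear_value s
        have hmin : msmin (F1 hn p).parts = s + 1 := by
          apply le_antisymm
          · exact msmin_le (by rw [hparts]; exact Multiset.mem_cons_self _ _)
          · have hm : msmin (F1 hn p).parts ∈ (s + 1) ::ₘ p.parts.erase s := by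
              rw [← hparts]; exact msmin_mem (parts_ne_zero (by omega) (F1 hn p))
            rcases Multiset.mem_cons.1 hm with h' | h'
            · exact h'.ge
            · rw [hsdef] at h'
              have := mem_erase_msmin_ge hp h'
              omega
        rw [hmin, hparts]
        simp only [Nat.add_sub_cancel]
        rw [Multiset.erase_cons_head]
        exact Multiset.cons_erase hs
    · rintro ⟨q, hq⟩
      by_cases h1 : 1 ∈ q.parts
      · dsimp only
        rw [if_pos h1]
        simp only [Bool.cond_false]
        refine Subtype.ext (Nat.Partition.ext ?_)
        show (F0 (G q)).parts = q.parts
        have hG : (G q).parts = q.parts.erase 1 := by unfold G; rw [dif_pos h1]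
        show 1 ::ₘ (G q).parts = q.parts
        rw [hG]
        exact Multiset.cons_erase h1
      · dsimp only
        rw [if_neg h1]
        simp only [Bool.cond_true]
        refine Subtype.ext (Nat.Partition.ext ?_)
        show (F1 hn (G q)).parts = q.parts
        have hq0 : q.parts ≠ 0 := parts_ne_zero (by omega) q
        have hs : msmin q.parts ∈ q.parts := msmin_mem hq0
        set s := msmin q.parts with hsdef
        have hG : (G q).parts = (s - 1) ::ₘ q.parts.erase s := by
          unfold G; rw [dif_neg h1]
        clear_value s
        have hs2 : 2 ≤ s := by
          have h0 : 0 < s := q.parts_pos hs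
          have : s ≠ 1 := fun h' => h1 (by rw [h'] at hs; exact hs)
          omega
        have hmin : msmin (G q).parts = s - 1 := by
          apply le_antisymm
          · exact msmin_le (by rw [hG]; exact Multiset.mem_cons_self _ _)
          · have hm : msmin (G q).parts ∈ (s - 1) ::ₘ q.parts.erase s := by
              rw [← hG]; exact msmin_mem (parts_ne_zero hn (G q))
            rcases Multiset.mem_cons.1 hm with h' | h'
            · exact h'.ge
            · have := msmin_le (Multiset.mem_of_mem_erase h')
              omega
        show (msmin (G q).parts + 1) ::ₘ ((G q).parts).erase (msmin (G q).parts) = q.parts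
        rw [hmin, hG]
        rw [Multiset.erase_cons_head]
        have hss : s - 1 + 1 = s := by omega
        rw [hss]
        exact Multiset.cons_erase hs
  have hA : Nat.card (Bool × {p : n.Partition // p.parts.Nodup}) = 2 * A n := by
    rw [Nat.card_prod]
    simp [A, Nat.card_eq_fintype_card]
  have hD : D (n + 1) = Nat.card {q : (n + 1).Partition // Dcond q} := rfl
  rw [hD, ← Nat.card_congr e, hA]

end TwoAD

/-- For every integer `n > 0`, `2 * A n = D (n+1)`. -/
theorem two_A_eq_D_succ (n : ℕ) (hn : 0 < n) : 2 * A n = D (n + 1) :=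
  TwoAD.two_A_eq_D_succ' n hn
end

section
/- For every integer n > 0, the number of partitions of n into odd parts equals the number of partitions of n+1 that contain exactly one even part, where that even part is strictly greater than every other part of the partition. -/
private lemma msup_mem (s : Multiset ℕ) (hs : s ≠ 0) : s.sup ∈ s := by
  induction s using Multiset.induction with
  | empty => simp at hs
  | cons a t ih =>
    rw [Multiset.sup_cons]
    rcases eq_or_ne t 0 with rfl | ht
    · simp
    · rcases le_total a t.sup with h | h
      · rw [sup_eq_right.2 h]
        exact Multiset.mem_cons_of_mem (ih ht)
      · rw [sup_eq_left.2 h]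
        exact Multiset.mem_cons_self a t

private lemma parts_ne_zero {n : ℕ} (hn : 0 < n) (p : n.Partition) : p.parts ≠ 0 := by
  intro h
  have := p.parts_sum
  rw [h] at this
  simp at this
  omega

private def mapF (n : ℕ) (p : n.Partition) (hM : p.parts.sup ∈ p.parts) : (n + 1).Partition where
  parts := (p.parts.sup + 1) ::ₘ p.parts.erase p.parts.sup
  parts_pos := by
    intro a ha
    rcases Multiset.mem_cons.1 ha with rfl | h
    · omega
    · exact p.parts_pos (Multiset.mem_of_mem_erase h)
  parts_sum := by
    have h := Multiset.cons_erase hM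
    have : (p.parts.sup ::ₘ p.parts.erase p.parts.sup).sum = n := by
      rw [h, p.parts_sum]
    rw [Multiset.sum_cons] at this ⊢
    omega

private def mapG (n : ℕ) (q : (n + 1).Partition) (hE : q.parts.sup ∈ q.parts)
    (h2 : 2 ≤ q.parts.sup) : n.Partition where
  parts := (q.parts.sup - 1) ::ₘ q.parts.erase q.parts.sup
  parts_pos := by
    intro a ha
    rcases Multiset.mem_cons.1 ha with rfl | h
    · omega
    · exact q.parts_pos (Multiset.mem_of_mem_erase h)
  parts_sum := by
    have h := Multiset.cons_erase hE
    have : (q.parts.sup ::ₘ q.parts.erase q.parts.sup).sum = n + 1 := by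
      rw [h, q.parts_sum]
    rw [Multiset.sum_cons] at this ⊢
    omega

/-- For every integer `n > 0`, the number of partitions of `n` into odd parts
equals the number of partitions of `n+1` containing exactly one even part,
that even part being strictly greater than every other part. -/
theorem odds_eq_one_even_part_succ (n : ℕ) (hn : 0 < n) :
    Nat.card {p : n.Partition // ∀ a ∈ p.parts, Odd a} =
    Nat.card {p : (n + 1).Partition //
      (p.parts.filter (fun a => Even a)).card = 1 ∧
      ∀ a ∈ p.parts, Even a → ∀ b ∈ p.parts, b ≠ a → b < a} := by
  -- key facts for a partition q satisfying the RHS predicate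
  have key : ∀ q : (n + 1).Partition,
      (q.parts.filter (fun a => Even a)).card = 1 →
      (∀ a ∈ q.parts, Even a → ∀ b ∈ q.parts, b ≠ a → b < a) →
      Even q.parts.sup ∧ Multiset.count q.parts.sup q.parts = 1 := by
    intro q h1 h2
    obtain ⟨e, he⟩ := Multiset.card_eq_one.1 h1
    have heq : e ∈ q.parts ∧ Even e := by
      have : e ∈ q.parts.filter (fun a => Even a) := by rw [he]; simp
      simpa using Multiset.mem_filter.1 this
    have hsup_mem : q.parts.sup ∈ q.parts :=
      msup_mem _ (parts_ne_zero (by omega) q)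
    have hsup_eq : q.parts.sup = e := by
      by_contra hne
      have := h2 e heq.1 heq.2 q.parts.sup hsup_mem hne
      exact absurd (Multiset.le_sup heq.1) (by omega)
    have hcount : Multiset.count e q.parts = 1 := by
      have : Multiset.count e (q.parts.filter (fun a => Even a)) = 1 := by
        rw [he]; simp
      rwa [Multiset.count_filter, if_pos heq.2] at this
    exact ⟨hsup_eq ▸ heq.2, hsup_eq ▸ hcount⟩
  apply Nat.card_congr
  refine
    { toFun := fun x => by
        refine ⟨mapF n x.1 (msup_mem _ (parts_ne_zero hn x.1)), ?_, ?_⟩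
        · have hodd : ∀ a ∈ x.1.parts.erase x.1.parts.sup, ¬ Even a := by
            intro a ha hae
            exact (Nat.not_even_iff_odd.2 (x.2 a (Multiset.mem_of_mem_erase ha))) hae
          show ((( x.1.parts.sup + 1) ::ₘ x.1.parts.erase x.1.parts.sup).filter
            (fun a => Even a)).card = 1
          rw [Multiset.filter_cons]
          have hsupodd := x.2 _ (msup_mem _ (parts_ne_zero hn x.1))
          rw [if_pos (by exact Odd.add_one hsupodd), Multiset.filter_eq_nil.2 hodd]
          simp
        · intro a ha hae b hb hne
          show b < a
          have hM := msup_mem _ (parts_ne_zero hn x.1)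
          have ha' : a = x.1.parts.sup + 1 := by
            rcases Multiset.mem_cons.1 ha with h | h
            · exact h
            · exact absurd hae (Nat.not_even_iff_odd.2
                (x.2 a (Multiset.mem_of_mem_erase h)))
          subst ha'
          rcases Multiset.mem_cons.1 hb with h | h
          · exact absurd h hne
          · have := Multiset.le_sup (Multiset.mem_of_mem_erase h)
            omega,
      invFun := fun x => by
        refine ⟨mapG n x.1 (msup_mem _ (parts_ne_zero (by omega) x.1)) ?_, ?_⟩
        · obtain ⟨hEv, hcnt⟩ := key x.1 x.2.1 x.2.2
          have := x.1.parts_pos (msup_mem _ (parts_ne_zero (by omega) x.1))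
          rcases hEv with ⟨k, hk⟩
          omega
        obtain ⟨hEv, hcnt⟩ := key x.1 x.2.1 x.2.2
        have hE : x.1.parts.sup ∈ x.1.parts := msup_mem _ (parts_ne_zero (by omega) x.1)
        intro a ha
        show Odd a
        rcases Multiset.mem_cons.1 ha with rfl | h
        · rcases hEv with ⟨k, hk⟩
          have := x.1.parts_pos hE
          rw [Nat.odd_iff]
          omega
        · have hane : a ≠ x.1.parts.sup := by
            intro rfl'
            have : Multiset.count a (x.1.parts.erase x.1.parts.sup) =
                Multiset.count x.1.parts.sup x.1.parts - 1 := by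
              rw [rfl', Multiset.count_erase_self]
            rw [hcnt] at this
            have := Multiset.count_pos.2 h
            omega
          have := x.2.2 _ hE hEv a (Multiset.mem_of_mem_erase h) hane
          rw [Nat.odd_iff]
          by_contra hpar
          have : Even a := Nat.even_iff.2 (by omega)
          have := x.2.2 a (Multiset.mem_of_mem_erase h) this x.1.parts.sup hE
            (by omega)
          omega,
      left_inv := ?_,
      right_inv := ?_ }
  · rintro ⟨p, hp⟩
    apply Subtype.ext
    apply Nat.Partition.ext
    show _ = p.parts
    have hM := msup_mem _ (parts_ne_zero hn p)
    -- parts of mapG (mapF p)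
    have hsup : ((p.parts.sup + 1) ::ₘ p.parts.erase p.parts.sup).sup = p.parts.sup + 1 := by
      rw [Multiset.sup_cons]
      have : (p.parts.erase p.parts.sup).sup ≤ p.parts.sup + 1 := by
        apply Multiset.sup_le.2
        intro b hb
        have := Multiset.le_sup (Multiset.mem_of_mem_erase hb)
        omega
      omega
    show ((mapF n p hM).parts.sup - 1) ::ₘ (mapF n p hM).parts.erase (mapF n p hM).parts.sup
        = p.parts
    have hparts : (mapF n p hM).parts = (p.parts.sup + 1) ::ₘ p.parts.erase p.parts.sup := rfl
    rw [hparts, hsup, Multiset.erase_cons_head, Nat.add_sub_cancel, Multiset.cons_erase hM]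
  · rintro ⟨q, hq1, hq2⟩
    apply Subtype.ext
    apply Nat.Partition.ext
    show _ = q.parts
    obtain ⟨hEv, hcnt⟩ := key q hq1 hq2
    have hE : q.parts.sup ∈ q.parts := msup_mem _ (parts_ne_zero (by omega) q)
    have h2 : 2 ≤ q.parts.sup := by
      have := q.parts_pos hE
      rcases hEv with ⟨k, hk⟩
      omega
    have hsub : ∀ b ∈ q.parts.erase q.parts.sup, b < q.parts.sup := by
      intro b hb
      have hbne : b ≠ q.parts.sup := by
        intro rfl'
        have h' : Multiset.count b (q.parts.erase q.parts.sup) =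
            Multiset.count q.parts.sup q.parts - 1 := by
          rw [rfl', Multiset.count_erase_self]
        rw [hcnt] at h'
        have := Multiset.count_pos.2 hb
        omega
      exact hq2 _ hE hEv b (Multiset.mem_of_mem_erase hb) hbne
    have hsup : ((q.parts.sup - 1) ::ₘ q.parts.erase q.parts.sup).sup = q.parts.sup - 1 := by
      rw [Multiset.sup_cons]
      have : (q.parts.erase q.parts.sup).sup ≤ q.parts.sup - 1 := by
        apply Multiset.sup_le.2
        intro b hb
        have := hsub b hb
        omega
      omega
    show ((mapG n q hE h2).parts.sup + 1) ::ₘ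
        (mapG n q hE h2).parts.erase (mapG n q hE h2).parts.sup = q.parts
    have hparts : (mapG n q hE h2).parts = (q.parts.sup - 1) ::ₘ q.parts.erase q.parts.sup := rfl
    rw [hparts, hsup, Multiset.erase_cons_head]
    have : q.parts.sup - 1 + 1 = q.parts.sup := by omega
    rw [this, Multiset.cons_erase hE]
end

section
/- For every integer n ≥ 2, the number of partitions of n in which the smallest part appears exactly twice and every other part appears exactly once equals 2·A(n−1) − A(n), where A(k) is the number of partitions of k into distinct parts. -/
namespace MinTwice

open Multiset

/-- the smallest part of a multiset of naturals -/
noncomputable def minp (s : Multiset ℕ) : ℕ := sInf {a | a ∈ s}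

theorem minp_mem {s : Multiset ℕ} (hs : s ≠ 0) : minp s ∈ s := by
  have : {a | a ∈ s}.Nonempty := by
    rcases exists_mem_of_ne_zero hs with ⟨a, ha⟩
    exact ⟨a, ha⟩
  exact Nat.sInf_mem this

theorem minp_le {s : Multiset ℕ} {b : ℕ} (hb : b ∈ s) : minp s ≤ b :=
  Nat.sInf_le hb

theorem minp_eq {s : Multiset ℕ} {b : ℕ} (hb : b ∈ s) (h : ∀ x ∈ s, b ≤ x) :
    minp s = b :=
  le_antisymm (minp_le hb) (h _ (minp_mem (by rintro rfl; simp at hb)))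

/-- Predicate: minimum part has multiplicity at most 2, all others exactly 1. -/
def Q {n : ℕ} (p : n.Partition) : Prop :=
  ∀ a ∈ p.parts, p.parts.count a = 1 ∨
    (p.parts.count a = 2 ∧ ∀ b ∈ p.parts, a ≤ b)

/-- Predicate from the theorem statement. -/
def Pm {n : ℕ} (p : n.Partition) : Prop :=
  ∀ a ∈ p.parts,
    (p.parts.count a = 2 ∧ ∀ b ∈ p.parts, a ≤ b) ∨
    (p.parts.count a = 1 ∧ ∃ b ∈ p.parts, b < a)

variable {n : ℕ}

theorem parts_ne_zero {p : n.Partition} (hn : 1 ≤ n) : p.parts ≠ 0 := by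
  intro h
  have := p.parts_sum
  rw [h] at this
  simp at this
  omega

/-- The split map: `S ⊕ D → T`. -/
noncomputable def splitMap (n : ℕ) :
    {p : n.Partition // Pm p} ⊕ {p : n.Partition // p.parts.Nodup} →
      {p : n.Partition // Q p} :=
  fun x =>
    match x with
    | Sum.inl ⟨p, hp⟩ => ⟨p, by
        intro a ha
        rcases hp a ha with ⟨h1, h2⟩ | ⟨h1, _⟩
        · exact Or.inr ⟨h1, h2⟩
        · exact Or.inl h1⟩
    | Sum.inr ⟨p, hp⟩ => ⟨p, by
        intro a ha
        exact Or.inl (count_eq_one_of_mem hp ha)⟩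

theorem splitMap_bijective (hn : 2 ≤ n) : Function.Bijective (splitMap n) := by
  constructor
  · rintro (⟨p, hp⟩ | ⟨p, hp⟩) (⟨q, hq⟩ | ⟨q, hq⟩) h <;>
      simp only [splitMap, Subtype.mk.injEq] at h
    · exact congrArg _ (Subtype.ext (by have h' := congrArg Subtype.val h; exact h'))
    · -- p satisfies Pm, q is Nodup, p = q : contradiction
      exfalso
      obtain rfl : p = q := congrArg Subtype.val h
      have hne : p.parts ≠ 0 := parts_ne_zero (by omega)
      have hm := minp_mem hne
      rcases hp _ hm with ⟨h1, _⟩ | ⟨_, b, hb, hlt⟩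
      · have := count_eq_one_of_mem hq hm
        omega
      · exact absurd (minp_le hb) (by omega)
    · exfalso
      obtain rfl : p = q := congrArg Subtype.val h
      have hne : p.parts ≠ 0 := parts_ne_zero (by omega)
      have hm := minp_mem hne
      rcases hq _ hm with ⟨h1, _⟩ | ⟨_, b, hb, hlt⟩
      · have := count_eq_one_of_mem hp hm
        omega
      · exact absurd (minp_le hb) (by omega)
    · exact congrArg _ (Subtype.ext (by have h' := congrArg Subtype.val h; exact h'))
  · rintro ⟨p, hp⟩
    by_cases hnd : p.parts.Nodup
    · exact ⟨Sum.inr ⟨p, hnd⟩, rfl⟩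
    · refine ⟨Sum.inl ⟨p, ?_⟩, rfl⟩
      -- some element has count ≥ 2; by Q it has count 2 and is minimal
      rw [nodup_iff_count_le_one] at hnd
      push_neg at hnd
      obtain ⟨c, hc2⟩ := hnd
      have hcmem : c ∈ p.parts := by
        rw [← count_pos]; omega
      have hc : p.parts.count c = 2 ∧ ∀ b ∈ p.parts, c ≤ b := by
        rcases hp c hcmem with h | h
        · omega
        · exact h
      intro a ha
      rcases hp a ha with h | ⟨h1, h2⟩
      · exact Or.inr ⟨h, by
          refine ⟨c, hcmem, ?_⟩
          rcases lt_or_eq_of_le (hc.2 a ha) with h' | h'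
          · exact h'
          · exfalso; rw [← h'] at h; omega⟩
      · exact Or.inl ⟨h1, h2⟩

/-- Map 1: insert a part `1`. -/
noncomputable def addOne (hn : 2 ≤ n) (q : {p : (n-1).Partition // p.parts.Nodup}) :
    {p : n.Partition // Q p} := by
  refine ⟨⟨1 ::ₘ q.1.parts, ?_, ?_⟩, ?_⟩
  · intro i hi
    rw [mem_cons] at hi
    rcases hi with rfl | hi
    · omega
    · exact q.1.parts_pos hi
  · rw [sum_cons, q.1.parts_sum]; omega
  · intro a ha
    rw [mem_cons] at ha
    by_cases h1 : a = 1
    · subst h1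
      rw [count_cons_self]
      by_cases hm : (1 : ℕ) ∈ q.1.parts
      · right
        refine ⟨by rw [count_eq_one_of_mem q.2 hm], ?_⟩
        intro b hb
        rw [mem_cons] at hb
        rcases hb with rfl | hb
        · exact le_refl _
        · exact q.1.parts_pos hb
      · left
        rw [count_eq_zero_of_notMem hm]
    · left
      rcases ha with rfl | ha
      · omega
      · rw [count_cons_of_ne h1, count_eq_one_of_mem q.2 ha]

/-- Map 2: bump the minimum part by one. -/
noncomputable def bumpMin (hn : 2 ≤ n) (q : {p : (n-1).Partition // p.parts.Nodup}) :
    {p : n.Partition // Q p} := by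
  classical
  have hne : q.1.parts ≠ 0 := parts_ne_zero (by omega)
  have hm : minp q.1.parts ∈ q.1.parts := minp_mem hne
  have hmemerase : ∀ a ∈ q.1.parts.erase (minp q.1.parts), minp q.1.parts + 1 ≤ a := by
    intro a ha
    have h1 := (q.2.mem_erase_iff).1 ha
    have := minp_le h1.2
    have : a ≠ minp q.1.parts := h1.1
    omega
  refine ⟨⟨(minp q.1.parts + 1) ::ₘ q.1.parts.erase (minp q.1.parts), ?_, ?_⟩, ?_⟩
  · intro i hi
    rw [mem_cons] at hi
    rcases hi with rfl | hi
    · omega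
    · exact q.1.parts_pos (mem_of_mem_erase hi)
  · rw [sum_cons]
    have h1 : q.1.parts = minp q.1.parts ::ₘ q.1.parts.erase (minp q.1.parts) :=
      (cons_erase hm).symm
    have h2 : q.1.parts.sum = minp q.1.parts + (q.1.parts.erase (minp q.1.parts)).sum := by
      conv_lhs => rw [h1]
      rw [sum_cons]
    have := q.1.parts_sum
    omega
  · intro a ha
    rw [mem_cons] at ha
    by_cases h1 : a = minp q.1.parts + 1
    · subst h1
      rw [count_cons_self]
      by_cases hm2 : minp q.1.parts + 1 ∈ q.1.parts.erase (minp q.1.parts)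
      · right
        constructor
        · rw [count_eq_one_of_mem (q.2.erase _) hm2]
        · intro b hb
          rw [mem_cons] at hb
          rcases hb with rfl | hb
          · exact le_refl _
          · exact hmemerase b hb
      · left
        rw [count_eq_zero_of_notMem hm2]
    · left
      rcases ha with h | ha
      · omega
      · rw [count_cons_of_ne h1, count_eq_one_of_mem (q.2.erase _) ha]

/-- Combined map. -/
noncomputable def bigMap (hn : 2 ≤ n) :
    {p : (n-1).Partition // p.parts.Nodup} ⊕ {p : (n-1).Partition // p.parts.Nodup} →
      {p : n.Partition // Q p} :=
  fun x =>
    match x with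
    | Sum.inl q => addOne hn q
    | Sum.inr q => bumpMin hn q

theorem bigMap_bijective (hn : 2 ≤ n) : Function.Bijective (bigMap hn) := by
  classical
  constructor
  · -- injectivity
    have h1notA : ∀ q, (1:ℕ) ∉ (bumpMin hn q).1.parts := by
      intro q h
      have hne : q.1.parts ≠ 0 := parts_ne_zero (by omega)
      have hm : minp q.1.parts ∈ q.1.parts := minp_mem hne
      have hpos : 0 < minp q.1.parts := q.1.parts_pos hm
      simp only [bumpMin, mem_cons] at h
      rcases h with h | h
      · omega
      · have h1 := (q.2.mem_erase_iff).1 h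
        have := minp_le h1.2
        have := q.1.parts_pos h1.2
        omega
    rintro (q | q) (r | r) h <;> simp only [bigMap] at h
    · -- addOne injective
      congr 1
      have : (1:ℕ) ::ₘ q.1.parts = 1 ::ₘ r.1.parts := by
        have := congrArg (fun x => x.1.parts) h
        simpa [addOne] using this
      exact Subtype.ext (Nat.Partition.ext (by
        exact (cons_inj_right _).1 this))
    · exfalso
      apply h1notA r
      rw [← h]
      simp [addOne]
    · exfalso
      apply h1notA q
      rw [h]
      simp [addOne]
    · -- bumpMin injective
      have hparts := congrArg (fun x => x.1.parts) h
      simp only [bumpMin] at hparts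
      have hneq : q.1.parts ≠ 0 := parts_ne_zero (by omega)
      have hner : r.1.parts ≠ 0 := parts_ne_zero (by omega)
      set mq := minp q.1.parts with hmq
      set mr := minp r.1.parts with hmr
      have hmqmem : mq ∈ q.1.parts := minp_mem hneq
      have hmrmem : mr ∈ r.1.parts := minp_mem hner
      -- min of both sides
      have hminq : minp ((mq + 1) ::ₘ q.1.parts.erase mq) = mq + 1 := by
        apply minp_eq (mem_cons_self _ _)
        intro x hx
        rw [mem_cons] at hx
        rcases hx with rfl | hx
        · exact le_refl _
        · have h1 := (q.2.mem_erase_iff).1 hx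
          have := minp_le h1.2
          have : x ≠ mq := h1.1
          omega
      have hminr : minp ((mr + 1) ::ₘ r.1.parts.erase mr) = mr + 1 := by
        apply minp_eq (mem_cons_self _ _)
        intro x hx
        rw [mem_cons] at hx
        rcases hx with rfl | hx
        · exact le_refl _
        · have h1 := (r.2.mem_erase_iff).1 hx
          have := minp_le h1.2
          have : x ≠ mr := h1.1
          omega
      have hmm : mq = mr := by
        have := hminq
        rw [hparts, hminr] at this
        omega
      clear_value mq mr
      subst hmm
      have he : q.1.parts.erase mq = r.1.parts.erase mq :=
        (cons_inj_right _).1 hparts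
      congr 1
      refine Subtype.ext (Nat.Partition.ext ?_)
      rw [← cons_erase hmqmem, ← cons_erase hmrmem, he]
  · -- surjectivity
    rintro ⟨p, hp⟩
    have hne : p.parts ≠ 0 := parts_ne_zero (by omega)
    by_cases h1 : (1:ℕ) ∈ p.parts
    · -- comes from addOne
      have hsum : (p.parts.erase 1).sum = n - 1 := by
        have h2 : p.parts.sum = 1 + (p.parts.erase 1).sum := by
          conv_lhs => rw [← cons_erase h1]
          rw [sum_cons]
        have := p.parts_sum
        omega
      have hnd : (p.parts.erase 1).Nodup := by
        rw [nodup_iff_count_le_one]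
        intro x
        by_cases hx : x = 1
        · subst hx
          rw [count_erase_self]
          rcases hp 1 h1 with h | ⟨h, _⟩ <;> omega
        · rw [count_erase_of_ne hx]
          by_cases hxm : x ∈ p.parts
          · rcases hp x hxm with h | ⟨h, hmin⟩
            · omega
            · exfalso
              have := hmin 1 h1
              have := p.parts_pos hxm
              omega
          · rw [count_eq_zero_of_notMem hxm]
            omega
      refine ⟨Sum.inl ⟨⟨p.parts.erase 1, ?_, hsum⟩, hnd⟩, ?_⟩
      · intro i hi
        exact p.parts_pos (mem_of_mem_erase hi)
      · simp only [bigMap, addOne]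
        exact Subtype.ext (Nat.Partition.ext (cons_erase h1))
    · -- comes from bumpMin
      set a := minp p.parts with hadef
      have ham : a ∈ p.parts := minp_mem hne
      have hapos : 0 < a := p.parts_pos ham
      have ha2 : 2 ≤ a := by
        rcases Nat.lt_or_ge a 2 with h | h
        · interval_cases a
          · exact absurd ham h1
        · exact h
      have hsum : ((a - 1) ::ₘ p.parts.erase a).sum = n - 1 := by
        rw [sum_cons]
        have h2 : p.parts.sum = a + (p.parts.erase a).sum := by
          conv_lhs => rw [← cons_erase ham]
          rw [sum_cons]
        have := p.parts_sum
        omega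
      have hcount : p.parts.count a ≤ 2 := by
        rcases hp a ham with h | ⟨h, _⟩ <;> omega
      have hnotmem : a - 1 ∉ p.parts.erase a := by
        intro h
        have := minp_le (mem_of_mem_erase h)
        omega
      have hnd : ((a - 1) ::ₘ p.parts.erase a).Nodup := by
        rw [nodup_iff_count_le_one]
        intro x
        by_cases hx : x = a - 1
        · subst hx
          rw [count_cons_self, count_eq_zero_of_notMem hnotmem]
        · rw [count_cons_of_ne hx]
          by_cases hxa : x = a
          · subst hxa
            rw [count_erase_self]
            omega
          · rw [count_erase_of_ne hxa]
            by_cases hxm : x ∈ p.parts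
            · rcases hp x hxm with h | ⟨h, hmin⟩
              · omega
              · exfalso
                have h1 := hmin a ham
                have h2 := minp_le hxm
                omega
            · rw [count_eq_zero_of_notMem hxm]; omega
      refine ⟨Sum.inr ⟨⟨(a - 1) ::ₘ p.parts.erase a, ?_, hsum⟩, hnd⟩, ?_⟩
      · intro i hi
        rw [mem_cons] at hi
        rcases hi with rfl | hi
        · omega
        · exact p.parts_pos (mem_of_mem_erase hi)
      · simp only [bigMap, bumpMin]
        have hmin : minp ((a - 1) ::ₘ p.parts.erase a) = a - 1 := by
          apply minp_eq (mem_cons_self _ _)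
          intro x hx
          rw [mem_cons] at hx
          rcases hx with rfl | hx
          · exact le_refl _
          · have := minp_le (mem_of_mem_erase hx)
            omega
        refine Subtype.ext (Nat.Partition.ext ?_)
        simp only [hmin]
        rw [erase_cons_head]
        have : a - 1 + 1 = a := by omega
        rw [this, cons_erase ham]

end MinTwice

/-- For every integer `n ≥ 2`, the number of partitions of `n` in which the
smallest part appears exactly twice and every other part appears exactly once
equals `2 * A (n-1) - A n` (as integers). -/
theorem min_twice_count (n : ℕ) (hn : 2 ≤ n) :
    (Nat.card {p : n.Partition //
        ∀ a ∈ p.parts,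
          (p.parts.count a = 2 ∧ ∀ b ∈ p.parts, a ≤ b) ∨
          (p.parts.count a = 1 ∧ ∃ b ∈ p.parts, b < a)} : ℤ) =
      2 * A (n - 1) - A n := by
  classical
  have h1 : Nat.card {p : n.Partition // MinTwice.Pm p} + Nat.card {p : n.Partition // p.parts.Nodup}
      = Nat.card {p : n.Partition // MinTwice.Q p} := by
    rw [← Nat.card_sum]
    exact Nat.card_eq_of_bijective _ (MinTwice.splitMap_bijective hn)
  have h2 : Nat.card {p : (n-1).Partition // p.parts.Nodup} +
      Nat.card {p : (n-1).Partition // p.parts.Nodup}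
      = Nat.card {p : n.Partition // MinTwice.Q p} := by
    rw [← Nat.card_sum]
    exact Nat.card_eq_of_bijective _ (MinTwice.bigMap_bijective hn)
  have hid : Nat.card {p : n.Partition //
        ∀ a ∈ p.parts,
          (p.parts.count a = 2 ∧ ∀ b ∈ p.parts, a ≤ b) ∨
          (p.parts.count a = 1 ∧ ∃ b ∈ p.parts, b < a)}
      = Nat.card {p : n.Partition // MinTwice.Pm p} := rfl
  rw [hid]
  unfold A
  omega
end
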